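/- arXiv:1307.2559 — 6 statements merged into one kernel-verified Lean document; each statement's English description precedes it below -/
import Mathlib

section
/- Let (X_t) be a stochastic process over a bounded state space S ⊆ ℝ≥0, adapted to its natural filtration, with first hitting time T_0 := min{t : X_t = 0} satisfying E[T_0 | X_0] < ∞. If E[X_t − X_{t+1} | F_t; X_t > 0] ≥ δ for some δ > 0, then E[T_0 | X_0] ≤ X_0/δ. -/
open MeasureTheory Filter Topology

/-- **Additive drift theorem, upper bound** (He–Yao). If `(X t)` is a stochastic
process over a bounded state space `S ⊆ ℝ≥0`, adapted to its natural filtration,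
`T ω = min {t | X t ω = 0}` has finite expectation, and the one-step drift
conditioned on the history is at least `δ > 0` on the event `{X t > 0, t < T}`,
then `E[T | X 0] ≤ X 0 / δ` almost surely. -/
theorem additive_drift_upper_bound
    {Ω : Type*} [MeasurableSpace Ω] (μ : Measure Ω) [IsProbabilityMeasure μ]
    (X : ℕ → Ω → ℝ) (hX : ∀ t, StronglyMeasurable (X t))
    (B : ℝ) (hbounded : ∀ t ω, X t ω ∈ Set.Icc (0 : ℝ) B)
    (T : Ω → ℕ) (hT : ∀ ω, T ω = sInf {t | X t ω = 0})
    (hTint : Integrable (fun ω => (T ω : ℝ)) μ)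
    (δ : ℝ) (hδ : 0 < δ)
    (hdrift : ∀ t, ∀ᵐ ω ∂μ, t < T ω → 0 < X t ω →
      δ ≤ (μ[X t - X (t + 1) | (MeasureTheory.Filtration.natural X hX) t]) ω) :
    ∀ᵐ ω ∂μ,
      (μ[fun ω' => (T ω' : ℝ) | (MeasureTheory.Filtration.natural X hX) 0]) ω
        ≤ X 0 ω / δ := by
  classical
  set F := MeasureTheory.Filtration.natural X hX with hF
  haveI hSF : ∀ n : ℕ, SigmaFinite (μ.trim (F.le n)) := fun n => by infer_instance
  -- basic facts about X
  have hXpos : ∀ t ω, 0 ≤ X t ω := fun t ω => (hbounded t ω).1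
  have hXB : ∀ t ω, X t ω ≤ B := fun t ω => (hbounded t ω).2
  have hXint : ∀ t, Integrable (X t) μ := by
    intro t
    refine (integrable_const B).mono' (hX t).aestronglyMeasurable
      (Filter.Eventually.of_forall fun ω => ?_)
    rw [Real.norm_eq_abs, abs_of_nonneg (hXpos t ω)]
    exact hXB t ω
  have hXmeasF : ∀ t, StronglyMeasurable[F t] (X t) := fun t =>
    MeasureTheory.Filtration.stronglyAdapted_natural hX t
  -- facts about T
  have hTne : ∀ (ω) (n : ℕ), n < T ω → X n ω ≠ 0 := by
    intro ω n hn h0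
    have : T ω ≤ n := by rw [hT ω]; exact Nat.sInf_le h0
    omega
  have hTXpos : ∀ (ω) (n : ℕ), n < T ω → 0 < X n ω := fun ω n hn =>
    lt_of_le_of_ne (hXpos n ω) (Ne.symm (hTne ω n hn))
  have hTmeas : Measurable T := by
    apply measurable_to_countable'
    intro k
    rcases Nat.eq_zero_or_pos k with hk | hk
    · subst hk
      have : T ⁻¹' {0} = (X 0 ⁻¹' {0}) ∪ ⋂ j, (X j ⁻¹' {0})ᶜ := by
        ext ω
        simp only [Set.mem_preimage, Set.mem_singleton_iff, Set.mem_union, Set.mem_iInter,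
          Set.mem_compl_iff, hT ω]
        rw [Nat.sInf_eq_zero]
        constructor
        · rintro (h | h)
          · exact Or.inl h
          · exact Or.inr fun j hj => (Set.eq_empty_iff_forall_notMem.mp h) j hj
        · rintro (h | h)
          · exact Or.inl h
          · exact Or.inr (Set.eq_empty_iff_forall_notMem.mpr fun j hj => h j hj)
      rw [this]
      exact MeasurableSet.union ((hX 0).measurable (measurableSet_singleton 0))
        (MeasurableSet.iInter fun j => ((hX j).measurable (measurableSet_singleton 0)).compl)
    · have : T ⁻¹' {k} = (X k ⁻¹' {0}) ∩ ⋂ (j : ℕ) (_ : j < k), (X j ⁻¹' {0})ᶜ := by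
        ext ω
        simp only [Set.mem_preimage, Set.mem_singleton_iff, Set.mem_inter_iff, Set.mem_iInter,
          Set.mem_compl_iff, hT ω]
        constructor
        · intro h
          have hne : {t | X t ω = 0}.Nonempty := by
            by_contra hc
            rw [Set.not_nonempty_iff_eq_empty] at hc
            rw [hc, Nat.sInf_empty] at h
            omega
          constructor
          · have := Nat.sInf_mem hne
            rwa [h] at this
          · intro j hj
            exact Nat.notMem_of_lt_sInf (h ▸ hj)
        · rintro ⟨hk0, hlt⟩
          have h1 : sInf {t | X t ω = 0} ≤ k := Nat.sInf_le hk0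
          rcases lt_or_eq_of_le h1 with h2 | h2
          · exact absurd (Nat.sInf_mem (⟨k, hk0⟩ : {t | X t ω = 0}.Nonempty)) (hlt _ h2)
          · exact h2
      rw [this]
      exact MeasurableSet.inter ((hX k).measurable (measurableSet_singleton 0))
        (MeasurableSet.iInter fun j => MeasurableSet.iInter fun _ =>
          ((hX j).measurable (measurableSet_singleton 0)).compl)
  have hsetT : ∀ n : ℕ, MeasurableSet {ω | n < T ω} := fun n =>
    hTmeas measurableSet_Ioi
  -- the sets G n : no zero up to time n
  set G : ℕ → Set Ω := fun n => {ω | ∀ k ≤ n, X k ω ≠ 0} with hG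
  have hGmeasF : ∀ n, MeasurableSet[F n] (G n) := by
    intro n
    have hGeq : G n = ⋂ (k : ℕ) (_ : k ≤ n), (X k ⁻¹' {0})ᶜ := by
      ext ω; simp [hG]
    rw [hGeq]
    refine MeasurableSet.iInter fun k => MeasurableSet.iInter fun hk => ?_
    exact F.mono hk _ (((hXmeasF k).measurable (measurableSet_singleton 0)).compl)
  have hGmeas : ∀ n, MeasurableSet (G n) := fun n => F.le n _ (hGmeasF n)
  have hTG : ∀ (n : ℕ) (ω), n < T ω → ω ∈ G n := by
    intro n ω hn k hk h0
    have : T ω ≤ k := by rw [hT ω]; exact Nat.sInf_le h0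
    omega
  -- the indicator I n and the counting function V m n
  set I : ℕ → Ω → ℝ := fun n ω => if n < T ω then (1 : ℝ) else 0 with hI
  have hIind : ∀ n, I n = Set.indicator {ω | n < T ω} (fun _ => (1 : ℝ)) := by
    intro n
    funext ω
    simp only [hI, Set.indicator_apply, Set.mem_setOf_eq]
  have hIint : ∀ n, Integrable (I n) μ := fun n =>
    (hIind n) ▸ (integrable_const (1 : ℝ)).indicator (hsetT n)
  have hInonneg : ∀ n ω, 0 ≤ I n ω := by
    intro n ω
    simp only [hI]
    split <;> norm_num
  have hIle : ∀ n ω, I n ω ≤ 1 := by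
    intro n ω
    simp only [hI]
    split <;> norm_num
  set V : ℕ → ℕ → Ω → ℝ := fun m n ω => ∑ k ∈ Finset.Ico n m, I k ω with hV
  have hVint : ∀ m n, Integrable (V m n) μ := fun m n =>
    integrable_finset_sum _ fun k _ => hIint k
  have hVnonneg : ∀ m n ω, 0 ≤ V m n ω := fun m n ω =>
    Finset.sum_nonneg fun k _ => hInonneg k ω
  -- the key backward induction claim
  have claim : ∀ m n : ℕ,
      ∀ᵐ ω ∂μ, δ * (μ[V m n | F n]) ω ≤ (G n).indicator (X n) ω := by
    intro m
    -- downward induction step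
    have step : ∀ n : ℕ, n < m →
        (∀ᵐ ω ∂μ, δ * (μ[V m (n + 1) | F (n + 1)]) ω ≤ (G (n + 1)).indicator (X (n + 1)) ω) →
        (∀ᵐ ω ∂μ, δ * (μ[V m n | F n]) ω ≤ (G n).indicator (X n) ω) := by
      intro n hnm IH
      set c := μ[V m (n + 1) | F (n + 1)] with hc
      set P := μ[I n | F n] with hP
      set q := μ[X (n + 1) | F n] with hq
      -- split V
      have hVsplit : V m n = I n + V m (n + 1) := by
        funext ω
        simp only [hV, Pi.add_apply]
        exact Finset.sum_eq_sum_Ico_succ_bot hnm _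
      have e1 : μ[V m n | F n] =ᵐ[μ] P + μ[V m (n + 1) | F n] := by
        rw [hVsplit]
        exact condExp_add (hIint n) (hVint m (n + 1)) (F n)
      have e2 : μ[V m (n + 1) | F n] =ᵐ[μ] μ[c | F n] :=
        (condExp_condExp_of_le (F.mono (Nat.le_succ n)) (F.le (n + 1))).symm
      have e3 : μ[δ • c | F n] =ᵐ[μ] δ • μ[c | F n] := condExp_smul δ c (F n)
      have e4 : μ[δ • c | F n] ≤ᵐ[μ] μ[(G (n + 1)).indicator (X (n + 1)) | F n] := by
        refine condExp_mono (integrable_condExp.smul δ)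
          ((hXint (n + 1)).indicator (hGmeas (n + 1))) ?_
        filter_upwards [IH] with ω hω
        simpa [Pi.smul_apply, smul_eq_mul] using hω
      have hindrw : (G (n + 1)).indicator (X (n + 1)) = (G n).indicator (X (n + 1)) := by
        funext ω
        by_cases h1 : ω ∈ G (n + 1)
        · have h1' : ω ∈ G n := fun k hk => h1 k (Nat.le_succ_of_le hk)
          rw [Set.indicator_of_mem h1, Set.indicator_of_mem h1']
        · rw [Set.indicator_of_notMem h1]
          by_cases h2 : ω ∈ G n
          · rw [Set.indicator_of_mem h2]
            have hzero : X (n + 1) ω = 0 := by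
              by_contra hne
              refine h1 fun k hk => ?_
              rcases Nat.lt_or_ge k (n + 1) with hlt | hge
              · exact h2 k (by omega)
              · have : k = n + 1 := by omega
                subst this; exact hne
            rw [hzero]
          · rw [Set.indicator_of_notMem h2]
      rw [hindrw] at e4
      -- pull out the indicator
      have hind1 : (G n).indicator (X (n + 1))
          = (G n).indicator (fun _ => (1 : ℝ)) * X (n + 1) := by
        funext ω
        simp only [Pi.mul_apply]
        by_cases h : ω ∈ G n
        · rw [Set.indicator_of_mem h, Set.indicator_of_mem h, one_mul]
        · rw [Set.indicator_of_notMem h, Set.indicator_of_notMem h, zero_mul]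
      have e6 : μ[(G n).indicator (X (n + 1)) | F n]
          =ᵐ[μ] (G n).indicator (fun _ => (1 : ℝ)) * q := by
        rw [hind1]
        exact condExp_mul_of_stronglyMeasurable_left
          (stronglyMeasurable_const.indicator (hGmeasF n))
          (hind1 ▸ (hXint (n + 1)).indicator (hGmeas n)) (hXint (n + 1))
      -- bounds on P
      have hP0 : 0 ≤ᵐ[μ] P :=
        condExp_nonneg (Filter.Eventually.of_forall fun ω => hInonneg n ω)
      have hP1 : P ≤ᵐ[μ] fun _ => (1 : ℝ) := by
        have h := condExp_mono (m := F n) (μ := μ) (hIint n) (integrable_const (1 : ℝ))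
          (Filter.Eventually.of_forall fun ω => hIle n ω)
        rwa [condExp_const (F.le n)] at h
      have hVleI : ∀ ω, V m n ω ≤ (m : ℝ) * I n ω := by
        intro ω
        by_cases h : n < T ω
        · have h1 : V m n ω ≤ ((Finset.Ico n m).card : ℝ) := by
            simp only [hV]
            calc ∑ k ∈ Finset.Ico n m, I k ω ≤ ∑ k ∈ Finset.Ico n m, 1 :=
                Finset.sum_le_sum fun k _ => hIle k ω
              _ = ((Finset.Ico n m).card : ℝ) := by
                rw [Finset.sum_const, nsmul_eq_mul, mul_one]
          refine h1.trans ?_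
          have h2 : I n ω = 1 := by simp [hI, h]
          rw [h2, mul_one, Nat.card_Ico]
          exact_mod_cast Nat.sub_le m n
        · have h0 : V m n ω = 0 := by
            simp only [hV]
            refine Finset.sum_eq_zero fun k hk => ?_
            have hk' : ¬ k < T ω := by
              have := Finset.mem_Ico.mp hk
              omega
            simp [hI, hk']
          have h2 : I n ω = 0 := by simp [hI, h]
          rw [h0, h2, mul_zero]
      have hPm : μ[V m n | F n] ≤ᵐ[μ] (m : ℝ) • P := by
        have h := condExp_mono (m := F n) (μ := μ) (hVint m n) ((hIint n).smul (m : ℝ))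
          (Filter.Eventually.of_forall fun ω => by
            simpa [smul_eq_mul] using hVleI ω)
        exact h.trans (condExp_smul (m : ℝ) (I n) (F n)).le
      -- the crux : the drift controls P
      have hgsub : μ[X n - X (n + 1) | F n] =ᵐ[μ] X n - q := by
        have h := condExp_sub (hXint n) (hXint (n + 1)) (m := F n)
        rwa [condExp_of_stronglyMeasurable (F.le n) (hXmeasF n) (hXint n)] at h
      set W := {ω | 0 < P ω ∧ (G n).indicator (X n) ω
        < δ * P ω + (G n).indicator (fun _ => (1 : ℝ)) ω * q ω} with hW
      have hWmeasF : MeasurableSet[F n] W := by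
        have hPm' : Measurable[F n] P := stronglyMeasurable_condExp.measurable
        have hqm : Measurable[F n] q := stronglyMeasurable_condExp.measurable
        have hXnm : Measurable[F n] (X n) := (hXmeasF n).measurable
        have hindm : Measurable[F n] ((G n).indicator (X n)) := hXnm.indicator (hGmeasF n)
        have hind1m : Measurable[F n] ((G n).indicator (fun _ => (1 : ℝ))) :=
          measurable_const.indicator (hGmeasF n)
        exact (measurableSet_lt measurable_const hPm').inter
          (measurableSet_lt hindm ((hPm'.const_mul δ).add (hind1m.mul hqm)))
      have hWm : MeasurableSet W := F.le n _ hWmeasF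
      have hWT : μ (W ∩ {ω | n < T ω}) = 0 := by
        refine measure_eq_zero_iff_ae_notMem.mpr ?_
        filter_upwards [hdrift n, hP1, hgsub] with ω hd hp1 hg
        rintro ⟨hWω, hnT⟩
        have hGn : ω ∈ G n := hTG n ω hnT
        have hd2 : δ ≤ X n ω - q ω := by
          have h := hd hnT (hTXpos ω n hnT)
          rw [hg] at h
          exact h
        simp only [hW, Set.mem_setOf_eq] at hWω
        obtain ⟨hppos, hlt⟩ := hWω
        rw [Set.indicator_of_mem hGn, Set.indicator_of_mem hGn] at hlt
        have hδP : δ * P ω ≤ δ := mul_le_of_le_one_right hδ.le hp1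
        simp only [one_mul] at hlt
        linarith
      have hIW : ∫ ω in W, I n ω ∂μ = 0 := by
        rw [hIind n, setIntegral_indicator (hsetT n), setIntegral_const, measureReal_def, hWT]
        simp
      have hPW : ∫ ω in W, P ω ∂μ = 0 := by
        rw [hP, setIntegral_condExp (F.le n) (hIint n) hWmeasF]
        exact hIW
      have hPWzero : ∀ᵐ ω ∂μ.restrict W, P ω = 0 := by
        have hPR : 0 ≤ᵐ[μ.restrict W] P := ae_restrict_of_ae hP0
        exact (integral_eq_zero_iff_of_nonneg_ae hPR integrable_condExp.restrict).mp hPW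
      have hWzero : μ W = 0 := by
        have h2 : μ.restrict W {ω | ¬ P ω = 0} = 0 := by
          rw [← MeasureTheory.ae_iff]
          exact hPWzero
        rw [Measure.restrict_apply' hWm] at h2
        refine le_antisymm (le_trans (measure_mono fun ω hω => ?_) h2.le) zero_le
        have hppos : 0 < P ω := hω.1
        exact ⟨ne_of_gt hppos, hω⟩
      have hWae : ∀ᵐ ω ∂μ, ω ∉ W := measure_eq_zero_iff_ae_notMem.mp hWzero
      -- combine everything
      filter_upwards [e1, e2, e3, e4, e6, hPm, hP0, hWae] with ω h1 h2 h3 h4 h6 hm' hp0 hnW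
      rcases eq_or_lt_of_le hp0 with hPz | hPpos
      · have hle : (μ[V m n | F n]) ω ≤ 0 := by
          have := hm'
          simp only [Pi.smul_apply, smul_eq_mul, ← hPz, Pi.zero_apply, mul_zero] at this
          exact this
        have hnn : 0 ≤ (G n).indicator (X n) ω :=
          Set.indicator_nonneg (fun x _ => hXpos n x) ω
        nlinarith
      · simp only [hW, Set.mem_setOf_eq, not_and, not_lt] at hnW
        have hkey := hnW hPpos
        have hchain : δ * (μ[V m n | F n]) ω
            ≤ δ * P ω + (G n).indicator (fun _ => (1 : ℝ)) ω * q ω := by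
          rw [h1]
          simp only [Pi.add_apply]
          rw [mul_add]
          have hb : δ * (μ[V m (n + 1) | F n]) ω
              ≤ (G n).indicator (fun _ => (1 : ℝ)) ω * q ω := by
            rw [h2]
            have : δ * (μ[c | F n]) ω = (μ[δ • c | F n]) ω := by
              rw [h3]; simp [smul_eq_mul]
            rw [this]
            refine h4.trans ?_
            rw [h6]
            simp [Pi.mul_apply]
          linarith
        exact hchain.trans hkey
    -- base case and downward induction
    have base : ∀ n : ℕ, m ≤ n →
        (∀ᵐ ω ∂μ, δ * (μ[V m n | F n]) ω ≤ (G n).indicator (X n) ω) := by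
      intro n hmn
      have hV0 : V m n = (0 : Ω → ℝ) := by
        funext ω
        simp only [hV, Pi.zero_apply]
        rw [Finset.Ico_eq_empty (by omega)]
        simp
      rw [hV0, condExp_zero]
      refine Filter.Eventually.of_forall fun ω => ?_
      simp only [Pi.zero_apply, mul_zero]
      exact Set.indicator_nonneg (fun x _ => hXpos n x) ω
    have main : ∀ j n : ℕ, n + j = m →
        (∀ᵐ ω ∂μ, δ * (μ[V m n | F n]) ω ≤ (G n).indicator (X n) ω) := by
      intro j
      induction j with
      | zero => intro n hn; exact base n (by omega)
      | succ j ih =>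
        intro n hn
        exact step n (by omega) (ih (n + 1) (by omega))
    intro n
    rcases le_or_gt m n with h | h
    · exact base n h
    · exact main (m - n) n (by omega)
  -- identify V m 0 with the truncated hitting time
  have hV0eq : ∀ m, V m 0 = fun ω => ((min (T ω) m : ℕ) : ℝ) := by
    intro m
    funext ω
    rw [hV]
    simp only
    rw [← Finset.range_eq_Ico]
    simp only [hI]
    rw [Finset.sum_boole]
    congr 1
    have : (Finset.range m).filter (fun k => k < T ω) = Finset.range (min (T ω) m) := by
      ext k
      simp only [Finset.mem_filter, Finset.mem_range, lt_min_iff]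
      tauto
    rw [this, Finset.card_range]
  -- set-integral consequence
  have key : ∀ m : ℕ, ∀ A : Set Ω, MeasurableSet[F 0] A →
      ∫ ω in A, ((min (T ω) m : ℕ) : ℝ) ∂μ ≤ (∫ ω in A, X 0 ω ∂μ) / δ := by
    intro m A hA
    have hclaim := claim m 0
    have hc2 : ∀ᵐ ω ∂μ, δ * (μ[V m 0 | F 0]) ω ≤ X 0 ω := by
      filter_upwards [hclaim] with ω hω
      refine hω.trans ?_
      by_cases h : ω ∈ G 0
      · rw [Set.indicator_of_mem h]
      · rw [Set.indicator_of_notMem h]; exact hXpos 0 ω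
    have hint1 : Integrable (fun ω => δ * (μ[V m 0 | F 0]) ω) μ :=
      integrable_condExp.const_mul δ
    have h3 : ∫ ω in A, δ * (μ[V m 0 | F 0]) ω ∂μ ≤ ∫ ω in A, X 0 ω ∂μ :=
      setIntegral_mono_ae hint1.integrableOn (hXint 0).integrableOn hc2
    rw [integral_const_mul] at h3
    rw [setIntegral_condExp (F.le 0) (hVint m 0) hA, hV0eq m] at h3
    rw [le_div_iff₀ hδ, mul_comm]
    exact h3
  -- pass to the limit in m
  have keyT : ∀ A : Set Ω, MeasurableSet[F 0] A →
      ∫ ω in A, (T ω : ℝ) ∂μ ≤ (∫ ω in A, X 0 ω ∂μ) / δ := by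
    intro A hA
    have hminmeas : ∀ m : ℕ, Measurable fun ω => ((min (T ω) m : ℕ) : ℝ) := by
      intro m
      exact measurable_from_top.comp (hTmeas.min measurable_const)
    have hminint : ∀ m : ℕ, Integrable (fun ω => ((min (T ω) m : ℕ) : ℝ)) μ := by
      intro m
      refine hTint.mono' (hminmeas m).aestronglyMeasurable
        (Filter.Eventually.of_forall fun ω => ?_)
      rw [Real.norm_eq_abs, abs_of_nonneg (by positivity)]
      exact_mod_cast min_le_left _ _
    have htendsto : Tendsto (fun m => ∫ ω in A, ((min (T ω) m : ℕ) : ℝ) ∂μ)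
        atTop (𝓝 (∫ ω in A, (T ω : ℝ) ∂μ)) := by
      refine integral_tendsto_of_tendsto_of_monotone
        (fun m => (hminint m).integrableOn) hTint.integrableOn
        (Filter.Eventually.of_forall fun ω => ?_)
        (Filter.Eventually.of_forall fun ω => ?_)
      · intro a b hab
        simp only
        exact_mod_cast min_le_min le_rfl hab
      · refine tendsto_atTop_of_eventually_const (i₀ := T ω) fun m hm => ?_
        rw [min_eq_left hm]
    exact le_of_tendsto htendsto (Filter.Eventually.of_forall fun m => key m A hA)
  -- conclude via the trim measure
  have hXdivmeas : StronglyMeasurable[F 0] (fun ω => X 0 ω / δ) := by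
    have : (fun ω => X 0 ω / δ) = fun ω => X 0 ω * δ⁻¹ := by
      funext ω; rw [div_eq_mul_inv]
    rw [this]
    exact (hXmeasF 0).mul stronglyMeasurable_const
  have hXdivint : Integrable (fun ω => X 0 ω / δ) μ := (hXint 0).div_const δ
  have htrim : (μ[fun ω' => (T ω' : ℝ) | F 0]) ≤ᵐ[μ.trim (F.le 0)] fun ω => X 0 ω / δ := by
    refine ae_le_of_forall_setIntegral_le
      (Integrable.trim (F.le 0) integrable_condExp stronglyMeasurable_condExp)
      (Integrable.trim (F.le 0) hXdivint hXdivmeas) fun s hs _ => ?_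
    rw [← setIntegral_trim (F.le 0) stronglyMeasurable_condExp hs,
      ← setIntegral_trim (F.le 0) hXdivmeas hs]
    rw [setIntegral_condExp (F.le 0) hTint hs]
    calc ∫ ω in s, (T ω : ℝ) ∂μ ≤ (∫ ω in s, X 0 ω ∂μ) / δ := keyT s hs
      _ = ∫ ω in s, X 0 ω / δ ∂μ := (integral_div δ _).symm
  exact ae_le_of_ae_le_trim htrim
end

section
/- Let (X_t) be a process over S ⊆ {0} ∪ [x_min, x_max], x_min ≥ 0, h: [x_min,x_max] → ℝ+ integrable, and define g(x) := x_min/h(x_min) + ∫_{x_min}^x 1/h(y) dy for x ≥ x_min, g(0) := 0. If E[X_t − X_{t+1} | F_t; X_t ≥ x_min] ≥ h(X_t) and E[g(X_t) − g(X_{t+1}) | F_t; X_t ≥ x_min] ≥ α_u > 0, then E[T_0 | X_0] ≤ g(X_0)/α_u. -/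
open MeasureTheory

/-- **General drift theorem, statement (i)** (upper bound on the expected hitting
time). `(X t)` is a process over `S ⊆ {0} ∪ [xmin, xmax]`, `h` a positive
integrable function on `[xmin, xmax]`,
`g x = xmin / h xmin + ∫_{xmin}^x 1/h(y) dy` for `x ≥ xmin` and `g 0 = 0`.
If `E[X t − X (t+1) | F_t; X t ≥ xmin] ≥ h (X t)` and
`E[g (X t) − g (X (t+1)) | F_t; X t ≥ xmin] ≥ α_u > 0`, then
`E[T₀ | X 0] ≤ g (X 0) / α_u` a.s., where `T₀ = min {t | X t = 0}`. -/
theorem general_drift_upper_bound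
    {Ω : Type*} [MeasurableSpace Ω] (μ : Measure Ω) [IsProbabilityMeasure μ]
    (X : ℕ → Ω → ℝ) (hX : ∀ t, StronglyMeasurable (X t))
    (xmin xmax : ℝ) (hxmin : 0 ≤ xmin)
    (hstate : ∀ t ω, X t ω = 0 ∨ X t ω ∈ Set.Icc xmin xmax)
    (h : ℝ → ℝ) (hpos : ∀ x ∈ Set.Icc xmin xmax, 0 < h x)
    (hint : IntegrableOn (fun y => (h y)⁻¹) (Set.Icc xmin xmax))
    (g : ℝ → ℝ) (hg0 : g 0 = 0)
    (hg : ∀ x, xmin ≤ x → g x = xmin / h xmin + ∫ y in xmin..x, (h y)⁻¹)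
    (T : Ω → ℕ) (hT : ∀ ω, T ω = sInf {t | X t ω = 0})
    (αu : ℝ) (hαu : 0 < αu)
    (hdrift : ∀ t, ∀ᵐ ω ∂μ, xmin ≤ X t ω →
      h (X t ω) ≤ (μ[X t - X (t + 1) | (MeasureTheory.Filtration.natural X hX) t]) ω)
    (hgdrift : ∀ t, ∀ᵐ ω ∂μ, xmin ≤ X t ω →
      αu ≤ (μ[(fun ω' => g (X t ω') - g (X (t + 1) ω')) |
        (MeasureTheory.Filtration.natural X hX) t]) ω) :
    ∀ᵐ ω ∂μ,
      (μ[fun ω' => (T ω' : ℝ) | (MeasureTheory.Filtration.natural X hX) 0]) ω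
        ≤ g (X 0 ω) / αu := by
  classical
  set F := MeasureTheory.Filtration.natural X hX with hF
  rcases lt_or_ge xmax xmin with hlt | hle
  · -- degenerate case: state space is {0}
    have hall : ∀ t ω, X t ω = 0 := fun t ω =>
      (hstate t ω).resolve_right (fun hm => absurd (hm.1.trans hm.2) (not_le.2 hlt))
    have hT0 : ∀ ω, T ω = 0 := fun ω => by
      rw [hT ω]; exact Nat.sInf_eq_zero.2 (Or.inl (hall 0 ω))
    have : (fun ω' => ((T ω' : ℝ))) = (0 : Ω → ℝ) := by
      funext ω; simp [hT0 ω]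
    rw [this, condExp_zero]
    filter_upwards with ω
    simp [hall 0 ω, hg0]
  -- main case
  have hxm : xmin ∈ Set.Icc xmin xmax := ⟨le_refl _, hle⟩
  set P : ℝ → ℝ := fun x => ∫ y in xmin..x, (h y)⁻¹ with hP
  -- nonnegativity and boundedness of g on states
  have hPnn : ∀ x ∈ Set.Icc xmin xmax, 0 ≤ P x := by
    intro x hx
    exact intervalIntegral.integral_nonneg hx.1
      (fun u hu => inv_nonneg.2 (hpos u ⟨hu.1, hu.2.trans hx.2⟩).le)
  set C : ℝ := xmin / h xmin + P xmax with hC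
  have hbase : 0 ≤ xmin / h xmin := div_nonneg hxmin (hpos xmin hxm).le
  have hCnn : 0 ≤ C := add_nonneg hbase (hPnn xmax ⟨hle, le_refl _⟩)
  have hPle : ∀ x ∈ Set.Icc xmin xmax, P x ≤ P xmax := by
    intro x hx
    have h1 : IntervalIntegrable (fun y => (h y)⁻¹) volume xmin x := by
      apply MeasureTheory.IntegrableOn.intervalIntegrable
      rw [Set.uIcc_of_le hx.1]
      exact hint.mono_set (Set.Icc_subset_Icc le_rfl hx.2)
    have h2 : IntervalIntegrable (fun y => (h y)⁻¹) volume x xmax := by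
      apply MeasureTheory.IntegrableOn.intervalIntegrable
      rw [Set.uIcc_of_le hx.2]
      exact hint.mono_set (Set.Icc_subset_Icc hx.1 le_rfl)
    have := intervalIntegral.integral_add_adjacent_intervals h1 h2
    have hnn : 0 ≤ ∫ y in x..xmax, (h y)⁻¹ :=
      intervalIntegral.integral_nonneg hx.2
        (fun u hu => inv_nonneg.2 (hpos u ⟨hx.1.trans hu.1, hu.2⟩).le)
    simp only [hP]
    linarith
  have hgnn : ∀ t ω, 0 ≤ g (X t ω) := by
    intro t ω
    rcases hstate t ω with h0 | hx
    · rw [h0, hg0]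
    · rw [hg _ hx.1]
      exact add_nonneg hbase (hPnn _ hx)
  have hgub : ∀ t ω, g (X t ω) ≤ C := by
    intro t ω
    rcases hstate t ω with h0 | hx
    · rw [h0, hg0]; exact hCnn
    · rw [hg _ hx.1]
      exact add_le_add_right (hPle _ hx) _
  -- measurability of g ∘ X t
  have hPcont : ContinuousOn P (Set.Icc xmin xmax) := by
    have := intervalIntegral.continuousOn_primitive_interval
      (f := fun y => (h y)⁻¹) (a := xmin) (b := xmax) (μ := volume)
      (by rwa [Set.uIcc_of_le hle])
    rwa [Set.uIcc_of_le hle] at this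
  set clamp : ℝ → ℝ := fun x => max xmin (min x xmax) with hclamp
  have hclampmem : ∀ x, clamp x ∈ Set.Icc xmin xmax :=
    fun x => ⟨le_max_left _ _, max_le hle (min_le_right _ _)⟩
  have hclampcont : Continuous clamp := continuous_const.max (continuous_id.min continuous_const)
  set G : ℝ → ℝ := fun x => if x = 0 then 0 else xmin / h xmin + P (clamp x) with hG
  have hGmeas : Measurable G := by
    have hc : Continuous fun x => xmin / h xmin + P (clamp x) :=
      continuous_const.add (hPcont.comp_continuous hclampcont hclampmem)
    exact Measurable.ite (measurableSet_singleton 0) measurable_const hc.measurable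
  have hGX : ∀ t ω, G (X t ω) = g (X t ω) := by
    intro t ω
    rcases eq_or_ne (X t ω) 0 with h0 | h0
    · simp [hG, h0, hg0]
    · have hx := (hstate t ω).resolve_left h0
      have : clamp (X t ω) = X t ω := by
        rw [hclamp]; simp only []
        rw [min_eq_left hx.2, max_eq_right hx.1]
      simp only [hG, if_neg h0, this]
      rw [hg _ hx.1]
  -- filtration measurability
  have hXF : ∀ {j n : ℕ}, j ≤ n → StronglyMeasurable[F n] (X j) := by
    intro j n hj
    exact ((Filtration.stronglyAdapted_natural hX) j).mono (F.mono hj)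
  have hgXF : ∀ {j n : ℕ}, j ≤ n → StronglyMeasurable[F n] (fun ω => g (X j ω)) := by
    intro j n hj
    have : (fun ω => g (X j ω)) = fun ω => G (X j ω) := by
      funext ω; rw [hGX]
    rw [this]
    exact (hGmeas.comp (hXF hj).measurable).stronglyMeasurable
  have hgXint : ∀ j, Integrable (fun ω => g (X j ω)) μ := by
    intro j
    refine Integrable.mono' (integrable_const C) ?_ ?_
    · exact ((hgXF le_rfl).mono (F.le j)).aestronglyMeasurable
    · filter_upwards with ω
      rw [Real.norm_eq_abs, abs_of_nonneg (hgnn j ω)]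
      exact hgub j ω
  -- the truncated stopping time
  set A : ℕ → Set Ω := fun n => {ω | ∀ j ≤ n, X j ω ≠ 0} with hA
  set τ : ℕ → Ω → ℕ := fun n ω =>
    Nat.rec 0 (fun k ih => if ω ∈ A k then k + 1 else ih) n with hτdef
  have hτ0 : ∀ ω, τ 0 ω = 0 := fun ω => rfl
  have hτsucc : ∀ n ω, τ (n + 1) ω = if ω ∈ A n then n + 1 else τ n ω := fun n ω => rfl
  have hAmeas : ∀ n, MeasurableSet[F n] (A n) := by
    intro n
    have : A n = ⋂ j ∈ Set.Iic n, (X j) ⁻¹' {(0:ℝ)}ᶜ := by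
      ext ω; simp [hA, Set.mem_iInter]
    rw [this]
    exact MeasurableSet.biInter (Set.to_countable _)
      (fun j hj => (hXF hj).measurable (measurableSet_singleton (0:ℝ)).compl)
  have hτle : ∀ n ω, τ n ω ≤ n := by
    intro n
    induction n with
    | zero => intro ω; exact le_rfl
    | succ n ih =>
      intro ω
      rw [hτsucc]
      split
      · exact le_rfl
      · exact (ih ω).trans (Nat.le_succ n)
  have hτA : ∀ n ω, (∀ j < n, X j ω ≠ 0) → τ n ω = n := by
    intro n
    induction n with
    | zero => intro ω _; exact rfl
    | succ n ih =>
      intro ω hω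
      rw [hτsucc, if_pos]
      intro j hj
      exact hω j (Nat.lt_succ_of_le hj)
  have hTτ : ∀ n ω, min (T ω) n ≤ τ n ω := by
    intro n
    induction n with
    | zero => intro ω; simp
    | succ n ih =>
      intro ω
      rw [hτsucc]
      split
      · exact min_le_right _ _
      · rename_i hωA
        simp only [hA, Set.mem_setOf_eq] at hωA
        push_neg at hωA
        obtain ⟨j, hjn, hj0⟩ := hωA
        have hTle : T ω ≤ j := by
          rw [hT]; exact Nat.sInf_le hj0
        have hTn : T ω ≤ n := hTle.trans hjn
        calc min (T ω) (n+1) = T ω := min_eq_left (hTn.trans (Nat.le_succ n))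
        _ = min (T ω) n := (min_eq_left hTn).symm
        _ ≤ τ n ω := ih ω
  -- the supermartingale-like process
  set Z : ℕ → Ω → ℝ := fun n ω => g (X (τ n ω) ω) + αu * τ n ω with hZ
  have hZrec : ∀ n, Z (n + 1) = fun ω => Z n ω +
      (A n).indicator (fun ω => g (X (n+1) ω) - g (X n ω) + αu) ω := by
    intro n
    funext ω
    by_cases hω : ω ∈ A n
    · have hτn : τ n ω = n := hτA n ω (fun j hj => hω j hj.le)
      have hτn1 : τ (n+1) ω = n + 1 := by rw [hτsucc, if_pos hω]
      simp only [hZ, hτn, hτn1, Set.indicator_of_mem hω]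
      push_cast
      ring
    · have hτn1 : τ (n+1) ω = τ n ω := by rw [hτsucc, if_neg hω]
      simp only [hZ, hτn1, Set.indicator_of_notMem hω, add_zero]
  have hZF : ∀ n, StronglyMeasurable[F n] (Z n) := by
    intro n
    induction n with
    | zero =>
      have : Z 0 = fun ω => g (X 0 ω) + αu * (0:ℕ) := by
        funext ω; simp only [hZ, hτ0]
      rw [this]
      exact (hgXF le_rfl).add stronglyMeasurable_const
    | succ n ih =>
      rw [hZrec n]
      refine StronglyMeasurable.add (ih.mono (F.mono (Nat.le_succ n))) ?_
      refine StronglyMeasurable.indicator ?_ ((F.mono (Nat.le_succ n)) _ (hAmeas n))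
      exact ((hgXF (le_refl (n+1))).sub
        (hgXF (Nat.le_succ n))).add stronglyMeasurable_const
  have hZnn : ∀ n ω, 0 ≤ Z n ω := by
    intro n ω
    exact add_nonneg (hgnn _ ω) (mul_nonneg hαu.le (Nat.cast_nonneg _))
  have hZub : ∀ n ω, Z n ω ≤ C + αu * n := by
    intro n ω
    refine add_le_add (hgub _ ω) ?_
    exact mul_le_mul_of_nonneg_left (Nat.cast_le.2 (hτle n ω)) hαu.le
  have hZint : ∀ n, Integrable (Z n) μ := by
    intro n
    refine Integrable.mono' (integrable_const (C + αu * n)) ?_ ?_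
    · exact ((hZF n).mono (F.le n)).aestronglyMeasurable
    · filter_upwards with ω
      rw [Real.norm_eq_abs, abs_of_nonneg (hZnn n ω)]
      exact hZub n ω
  -- one-step supermartingale inequality
  have hdiffint : ∀ n, Integrable (fun ω => g (X (n+1) ω) - g (X n ω) + αu) μ :=
    fun n => ((hgXint (n+1)).sub (hgXint n)).add (integrable_const αu)
  have hindint : ∀ n,
      Integrable ((A n).indicator (fun ω => g (X (n+1) ω) - g (X n ω) + αu)) μ :=
    fun n => (hdiffint n).indicator ((F.le n) _ (hAmeas n))
  have step1 : ∀ n, μ[Z (n+1) | F n] ≤ᵐ[μ] Z n := by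
    intro n
    set D : Ω → ℝ := (fun ω => g (X (n+1) ω)) - (fun ω => g (X n ω)) + fun _ => αu with hD
    have hDint : Integrable D μ := ((hgXint (n+1)).sub (hgXint n)).add (integrable_const αu)
    have e1 : μ[Z (n+1)|F n] =ᵐ[μ] μ[Z n|F n] + μ[(A n).indicator D|F n] := by
      have hzz : Z (n+1) = Z n + (A n).indicator D := by
        rw [hZrec n]; rfl
      rw [hzz]
      exact condExp_add (hZint n) (hDint.indicator ((F.le n) _ (hAmeas n))) _
    have e2 : μ[Z n|F n] = Z n :=
      condExp_of_stronglyMeasurable (F.le n) (hZF n) (hZint n)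
    have e3 : μ[(A n).indicator D|F n] =ᵐ[μ] (A n).indicator (μ[D|F n]) :=
      condExp_indicator hDint (hAmeas n)
    have e4 : μ[D|F n] =ᵐ[μ]
        μ[(fun ω => g (X (n+1) ω)) - (fun ω => g (X n ω))|F n] + fun _ => αu := by
      refine (condExp_add ((hgXint (n+1)).sub (hgXint n)) (integrable_const αu) _).trans ?_
      rw [condExp_const (F.le n) αu]
    have e5 : μ[(fun ω => g (X (n+1) ω)) - (fun ω => g (X n ω))|F n] =ᵐ[μ]
        -μ[fun ω' => g (X n ω') - g (X (n+1) ω')|F n] := by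
      have h9 : (fun ω => g (X (n+1) ω)) - (fun ω => g (X n ω)) =
          -(fun ω' => g (X n ω') - g (X (n+1) ω')) := by
        funext ω; simp [Pi.sub_apply, neg_sub]
      rw [h9]
      exact condExp_neg _ _
    filter_upwards [e1, e3, e4, e5, hgdrift n] with ω h1 h3 h4 h5 hdω
    rw [h1]
    simp only [Pi.add_apply, e2]
    have hind : (μ[(A n).indicator D|F n]) ω ≤ 0 := by
      rw [h3]
      by_cases hω : ω ∈ A n
      · rw [Set.indicator_of_mem hω, h4]
        simp only [Pi.add_apply, h5, Pi.neg_apply]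
        have hx : xmin ≤ X n ω := by
          have hne : X n ω ≠ 0 := hω n le_rfl
          exact ((hstate n ω).resolve_left hne).1
        have := hdω hx
        linarith
      · rw [Set.indicator_of_notMem hω]
    linarith
  -- iterated inequality
  have key : ∀ n, μ[Z n | F 0] ≤ᵐ[μ] fun ω => g (X 0 ω) := by
    intro n
    induction n with
    | zero =>
      have hZ0 : Z 0 = fun ω => g (X 0 ω) := by
        funext ω; simp [hZ, hτ0]
      rw [hZ0, condExp_of_stronglyMeasurable (F.le 0) (hgXF le_rfl) (hgXint 0)]
    | succ n ih =>
      have tower : μ[Z (n+1)|F 0] =ᵐ[μ] μ[μ[Z (n+1)|F n]|F 0] :=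
        (condExp_condExp_of_le (F.mono (Nat.zero_le n)) (F.le n)).symm
      have mono1 : μ[μ[Z (n+1)|F n]|F 0] ≤ᵐ[μ] μ[Z n|F 0] :=
        condExp_mono integrable_condExp (hZint n) (step1 n)
      exact tower.le.trans (mono1.trans ih)
  -- measurability and integrability of τ
  have hτF : ∀ n, StronglyMeasurable[F n] (fun ω => (τ n ω : ℝ)) := by
    intro n
    induction n with
    | zero => simp only [hτ0]; exact stronglyMeasurable_const
    | succ n ih =>
      have : (fun ω => (τ (n+1) ω : ℝ)) = fun ω =>
          (τ n ω : ℝ) + (A n).indicator (fun ω => ((n:ℝ) + 1) - τ n ω) ω := by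
        funext ω
        by_cases hω : ω ∈ A n
        · rw [hτsucc, if_pos hω, Set.indicator_of_mem hω]; push_cast; ring
        · rw [hτsucc, if_neg hω, Set.indicator_of_notMem hω, add_zero]
      rw [this]
      refine StronglyMeasurable.add (ih.mono (F.mono (Nat.le_succ n))) ?_
      refine StronglyMeasurable.indicator ?_ ((F.mono (Nat.le_succ n)) _ (hAmeas n))
      exact stronglyMeasurable_const.sub (ih.mono (F.mono (Nat.le_succ n)))
  have hτint : ∀ n, Integrable (fun ω => (τ n ω : ℝ)) μ := by
    intro n
    refine Integrable.mono' (integrable_const (n:ℝ)) ?_ ?_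
    · exact ((hτF n).mono (F.le n)).aestronglyMeasurable
    · filter_upwards with ω
      rw [Real.norm_eq_abs, abs_of_nonneg (Nat.cast_nonneg _)]
      exact_mod_cast hτle n ω
  -- conditional expectation bound for τ
  have keyτ : ∀ n, μ[fun ω => (τ n ω : ℝ) | F 0] ≤ᵐ[μ] fun ω => g (X 0 ω) / αu := by
    intro n
    have hmul : Integrable (fun ω => αu * (τ n ω : ℝ)) μ := (hτint n).const_mul αu
    have hle1 : (fun ω => αu * (τ n ω : ℝ)) ≤ᵐ[μ] Z n := by
      filter_upwards with ω
      have : αu * (τ n ω : ℝ) ≤ g (X (τ n ω) ω) + αu * τ n ω := by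
        have := hgnn (τ n ω) ω
        linarith
      exact this
    have h2 : μ[fun ω => αu * (τ n ω : ℝ)|F 0] ≤ᵐ[μ] μ[Z n|F 0] :=
      condExp_mono hmul (hZint n) hle1
    have h3 : μ[fun ω => αu * (τ n ω : ℝ)|F 0] =ᵐ[μ]
        fun ω => αu * (μ[fun ω => (τ n ω : ℝ)|F 0]) ω := by
      have := condExp_smul (m := F 0) (μ := μ) (αu : ℝ) (fun ω => (τ n ω : ℝ))
      refine Filter.EventuallyEq.trans ?_ (this.trans ?_)
      · rfl
      · filter_upwards with ω; simp
    filter_upwards [h2, h3, key n] with ω h2ω h3ω hkω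
    rw [le_div_iff₀ hαu, mul_comm]
    calc αu * (μ[fun ω => (τ n ω : ℝ)|F 0]) ω = (μ[fun ω => αu * (τ n ω : ℝ)|F 0]) ω := h3ω.symm
    _ ≤ (μ[Z n|F 0]) ω := h2ω
    _ ≤ g (X 0 ω) := hkω
  -- final limiting argument
  by_cases hTi : Integrable (fun ω' => (T ω' : ℝ)) μ
  swap
  · rw [condExp_of_not_integrable hTi]
    filter_upwards with ω
    exact div_nonneg (hgnn 0 ω) hαu.le
  set mT : ℕ → Ω → ℝ := fun n ω => min ((T ω : ℝ)) (n : ℝ) with hmT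
  have hmTsm : ∀ n, AEStronglyMeasurable (mT n) μ := fun n =>
    (hTi.1.aemeasurable.min aemeasurable_const).aestronglyMeasurable
  have hmTnn : ∀ n ω, 0 ≤ mT n ω := fun n ω =>
    le_min (Nat.cast_nonneg _) (Nat.cast_nonneg _)
  have hmTint : ∀ n, Integrable (mT n) μ := by
    intro n
    refine Integrable.mono' (integrable_const (n : ℝ)) (hmTsm n) ?_
    filter_upwards with ω
    rw [Real.norm_eq_abs, abs_of_nonneg (hmTnn n ω)]
    exact min_le_right _ _
  have hmTleτ : ∀ n ω, mT n ω ≤ (τ n ω : ℝ) := by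
    intro n ω
    have := hTτ n ω
    calc mT n ω = ((min (T ω) n : ℕ) : ℝ) := by simp [hmT, Nat.cast_min]
    _ ≤ (τ n ω : ℝ) := by exact_mod_cast this
  have keymin : ∀ n, μ[mT n|F 0] ≤ᵐ[μ] fun ω => g (X 0 ω) / αu := by
    intro n
    exact (condExp_mono (hmTint n) (hτint n)
      (Filter.Eventually.of_forall (hmTleτ n))).trans (keyτ n)
  have hsubint : ∀ n, Integrable (fun ω => (T ω : ℝ) - mT n ω) μ :=
    fun n => hTi.sub (hmTint n)
  set D : ℕ → Ω → ℝ := fun n => μ[fun ω => (T ω : ℝ) - mT n ω|F 0] with hD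
  have hDnn : ∀ n, 0 ≤ᵐ[μ] D n := fun n =>
    condExp_nonneg (Filter.Eventually.of_forall fun ω => sub_nonneg.2 (min_le_left _ _))
  have hsplit : ∀ n, μ[fun ω' => (T ω' : ℝ)|F 0] =ᵐ[μ] μ[mT n|F 0] + D n := by
    intro n
    have : (fun ω' => (T ω' : ℝ)) = mT n + fun ω => (T ω : ℝ) - mT n ω := by
      funext ω; simp
    rw [this]
    exact condExp_add (hmTint n) (hsubint n) _
  have hboundn : ∀ n, ∀ᵐ ω ∂μ,
      (μ[fun ω' => (T ω' : ℝ)|F 0]) ω ≤ g (X 0 ω) / αu + D n ω := by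
    intro n
    filter_upwards [hsplit n, keymin n] with ω h1 h2
    rw [h1, Pi.add_apply]
    exact add_le_add_left h2 _
  -- the integrals of D n tend to 0
  have htend : Filter.Tendsto (fun n => ∫ ω, ((T ω : ℝ) - mT n ω) ∂μ)
      Filter.atTop (nhds 0) := by
    have h0 : (0 : ℝ) = ∫ _ω, (0 : ℝ) ∂μ := by simp
    rw [h0]
    refine tendsto_integral_of_dominated_convergence (fun ω => (T ω : ℝ))
      (fun n => (hsubint n).1) hTi ?_ ?_
    · intro n
      filter_upwards with ω
      rw [Real.norm_eq_abs, abs_of_nonneg (sub_nonneg.2 (min_le_left _ _))]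
      have := hmTnn n ω
      linarith
    · filter_upwards with ω
      refine tendsto_atTop_of_eventually_const (i₀ := T ω) fun n hn => ?_
      have : mT n ω = (T ω : ℝ) := min_eq_left (by exact_mod_cast hn)
      rw [this, sub_self]
  have hDint : ∀ n, ∫ ω, D n ω ∂μ = ∫ ω, ((T ω : ℝ) - mT n ω) ∂μ := fun n =>
    integral_condExp (F.le 0)
  set e : ℕ → Ω → ENNReal := fun n ω => ENNReal.ofReal (D n ω) with he
  have hemeas : ∀ n, Measurable (e n) :=
    fun n => ((stronglyMeasurable_condExp.mono (F.le 0)).measurable).ennreal_ofReal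
  have helint : ∀ n, ∫⁻ ω, e n ω ∂μ = ENNReal.ofReal (∫ ω, D n ω ∂μ) := fun n =>
    (ofReal_integral_eq_lintegral_ofReal integrable_condExp (hDnn n)).symm
  have hetend : Filter.Tendsto (fun n => ∫⁻ ω, e n ω ∂μ) Filter.atTop (nhds 0) := by
    have : Filter.Tendsto (fun n => ENNReal.ofReal (∫ ω, D n ω ∂μ))
        Filter.atTop (nhds (ENNReal.ofReal 0)) := by
      refine ENNReal.tendsto_ofReal ?_
      simp_rw [hDint]
      exact htend
    simp only [ENNReal.ofReal_zero] at this
    simpa only [helint] using this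
  have hliminf0 : ∀ᵐ ω ∂μ, Filter.liminf (fun n => e n ω) Filter.atTop = 0 := by
    have h1 : ∫⁻ ω, Filter.liminf (fun n => e n ω) Filter.atTop ∂μ = 0 := by
      refine le_antisymm ?_ (zero_le)
      calc ∫⁻ ω, Filter.liminf (fun n => e n ω) Filter.atTop ∂μ
          ≤ Filter.liminf (fun n => ∫⁻ ω, e n ω ∂μ) Filter.atTop :=
            lintegral_liminf_le hemeas
      _ = 0 := hetend.liminf_eq
    exact (lintegral_eq_zero_iff (Measurable.liminf hemeas)).1 h1
  filter_upwards [ae_all_iff.2 hboundn, ae_all_iff.2 hDnn, hliminf0] with ω hb hnn hlim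
  by_contra hcon
  push_neg at hcon
  set δ : ℝ := (μ[fun ω' => (T ω' : ℝ)|F 0]) ω - g (X 0 ω) / αu with hδ
  have hδpos : 0 < δ := sub_pos.2 hcon
  have hDge : ∀ n, δ ≤ D n ω := fun n => by
    have := hb n
    simp only [hδ]
    linarith
  have hge : ENNReal.ofReal δ ≤ Filter.liminf (fun n => e n ω) Filter.atTop := by
    refine Filter.le_liminf_of_le ?_ ?_
    · isBoundedDefault
    · exact Filter.Eventually.of_forall fun n => ENNReal.ofReal_le_ofReal (hDge n)
  rw [hlim] at hge
  have : ENNReal.ofReal δ = 0 := le_antisymm hge (zero_le)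
  rw [ENNReal.ofReal_eq_zero] at this
  linarith
end

section
/- Let h be a real-valued differentiable function on [x_min, x_max] with h > 0, λ > 0, and define g(x) := ∫_{x_min}^x 1/h(y) dy. If h'(x) ≥ λ for all x, then x ↦ e^{λ g(x)} is concave; if h'(x) ≤ λ, then e^{λ g(x)} is convex; if h'(x) ≥ −λ, then e^{−λ g(x)} is convex; if h'(x) ≤ −λ, then e^{−λ g(x)} is concave. -/
open MeasureTheory

section Aux

variable (xmin xmax : ℝ)

lemma exp_int_inv_aux (hle : xmin ≤ xmax)
    (h h' : ℝ → ℝ)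
    (hpos : ∀ x ∈ Set.Icc xmin xmax, 0 < h x)
    (hderiv : ∀ x ∈ Set.Icc xmin xmax, HasDerivAt h (h' x) x)
    (c : ℝ) (g : ℝ → ℝ) (hg : ∀ x, g x = ∫ y in xmin..x, (h y)⁻¹) :
    ContinuousOn (fun x => Real.exp (c * g x)) (Set.Icc xmin xmax) ∧
    (∀ x ∈ interior (Set.Icc xmin xmax),
      HasDerivWithinAt (fun x => Real.exp (c * g x))
        (Real.exp (c * g x) * (c * (h x)⁻¹)) (interior (Set.Icc xmin xmax)) x) ∧
    (∀ x ∈ interior (Set.Icc xmin xmax),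
      HasDerivWithinAt (fun x => Real.exp (c * g x) * (c * (h x)⁻¹))
        (c * (c - h' x) * ((h x)⁻¹) ^ 2 * Real.exp (c * g x))
        (interior (Set.Icc xmin xmax)) x) := by
  have hgfun : g = fun x => ∫ y in xmin..x, (h y)⁻¹ := funext hg
  have hconth : ContinuousOn h (Set.Icc xmin xmax) := fun x hx =>
    (hderiv x hx).continuousAt.continuousWithinAt
  have hinv : ContinuousOn (fun y => (h y)⁻¹) (Set.Icc xmin xmax) :=
    hconth.inv₀ fun x hx => (hpos x hx).ne'
  have hgcont : ContinuousOn g (Set.Icc xmin xmax) := by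
    rw [hgfun]
    have := intervalIntegral.continuousOn_primitive_interval
      (f := fun y => (h y)⁻¹) (μ := volume) (a := xmin) (b := xmax)
      (by rw [Set.uIcc_of_le hle]; exact hinv.integrableOn_Icc)
    rwa [Set.uIcc_of_le hle] at this
  have hIoo : interior (Set.Icc xmin xmax) = Set.Ioo xmin xmax := interior_Icc
  -- derivative of g at interior points
  have hgderiv : ∀ x ∈ Set.Ioo xmin xmax, HasDerivAt g ((h x)⁻¹) x := by
    intro x hx
    have hxI : x ∈ Set.Icc xmin xmax := Set.Ioo_subset_Icc_self hx
    have hint : IntervalIntegrable (fun y => (h y)⁻¹) volume xmin x := by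
      apply ContinuousOn.intervalIntegrable
      apply hinv.mono
      rw [Set.uIcc_of_le hx.1.le]
      exact Set.Icc_subset_Icc le_rfl hxI.2
    have hmeas : StronglyMeasurableAtFilter (fun y => (h y)⁻¹) (nhds x) volume :=
      (hinv.mono Set.Ioo_subset_Icc_self).stronglyMeasurableAtFilter isOpen_Ioo
        (μ := volume) x hx
    have hca : ContinuousAt (fun y => (h y)⁻¹) x :=
      (hinv.mono Set.Ioo_subset_Icc_self).continuousAt (isOpen_Ioo.mem_nhds hx)
    rw [hgfun]
    exact intervalIntegral.integral_hasDerivAt_right hint hmeas hca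
  refine ⟨Real.continuous_exp.comp_continuousOn (continuousOn_const.mul hgcont), ?_, ?_⟩
  · intro x hx
    rw [hIoo] at hx
    exact (((hgderiv x hx).const_mul c).exp).hasDerivWithinAt
  · intro x hx
    rw [hIoo] at hx
    have hxI : x ∈ Set.Icc xmin xmax := Set.Ioo_subset_Icc_self hx
    have hne : h x ≠ 0 := (hpos x hxI).ne'
    have h1 : HasDerivAt (fun x => Real.exp (c * g x))
        (Real.exp (c * g x) * (c * (h x)⁻¹)) x :=
      ((hgderiv x hx).const_mul c).exp
    have h2 : HasDerivAt (fun x => c * (h x)⁻¹)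
        (c * (-(h' x) / (h x) ^ 2)) x :=
      ((hderiv x hxI).inv hne).const_mul c
    have h3 := h1.mul h2
    have : Real.exp (c * g x) * (c * (h x)⁻¹) * (c * (h x)⁻¹) +
        Real.exp (c * g x) * (c * (-(h' x) / h x ^ 2)) =
        c * (c - h' x) * ((h x)⁻¹) ^ 2 * Real.exp (c * g x) := by
      field_simp
      ring
    rw [this] at h3
    exact h3.hasDerivWithinAt

end Aux

/-- Convexity/concavity of exponential transforms of `g(x) = ∫_{xmin}^x 1/h(y) dy`
for a positive differentiable `h` on `[xmin, xmax]` and `λ > 0`: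
if `h' ≥ λ` then `e^{λ g}` is concave; if `h' ≤ λ` then `e^{λ g}` is convex;
if `h' ≥ −λ` then `e^{−λ g}` is convex; if `h' ≤ −λ` then `e^{−λ g}` is concave. -/
theorem exp_of_integral_inv_convexity
    (xmin xmax : ℝ) (hle : xmin ≤ xmax)
    (h h' : ℝ → ℝ)
    (hpos : ∀ x ∈ Set.Icc xmin xmax, 0 < h x)
    (hderiv : ∀ x ∈ Set.Icc xmin xmax, HasDerivAt h (h' x) x)
    (lam : ℝ) (hlam : 0 < lam)
    (g : ℝ → ℝ) (hg : ∀ x, g x = ∫ y in xmin..x, (h y)⁻¹) :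
    ((∀ x ∈ Set.Icc xmin xmax, lam ≤ h' x) →
      ConcaveOn ℝ (Set.Icc xmin xmax) (fun x => Real.exp (lam * g x))) ∧
    ((∀ x ∈ Set.Icc xmin xmax, h' x ≤ lam) →
      ConvexOn ℝ (Set.Icc xmin xmax) (fun x => Real.exp (lam * g x))) ∧
    ((∀ x ∈ Set.Icc xmin xmax, -lam ≤ h' x) →
      ConvexOn ℝ (Set.Icc xmin xmax) (fun x => Real.exp (-lam * g x))) ∧
    ((∀ x ∈ Set.Icc xmin xmax, h' x ≤ -lam) →
      ConcaveOn ℝ (Set.Icc xmin xmax) (fun x => Real.exp (-lam * g x))) := by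
  have hconv : Convex ℝ (Set.Icc xmin xmax) := convex_Icc _ _
  have key := fun c => exp_int_inv_aux xmin xmax hle h h' hpos hderiv c g hg
  obtain ⟨hc1, hd1, hd1'⟩ := key lam
  obtain ⟨hc2, hd2, hd2'⟩ := key (-lam)
  have hmem : ∀ x ∈ interior (Set.Icc xmin xmax), x ∈ Set.Icc xmin xmax := fun x hx =>
    interior_subset hx
  refine ⟨fun hyp => ?_, fun hyp => ?_, fun hyp => ?_, fun hyp => ?_⟩
  · refine concaveOn_of_hasDerivWithinAt2_nonpos hconv hc1 hd1 hd1' fun x hx => ?_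
    have := hyp x (hmem x hx)
    have h1 : lam * (lam - h' x) ≤ 0 :=
      mul_nonpos_of_nonneg_of_nonpos hlam.le (by linarith)
    have := mul_nonneg (sq_nonneg ((h x)⁻¹)) (Real.exp_pos (lam * g x)).le
    nlinarith
  · refine convexOn_of_hasDerivWithinAt2_nonneg hconv hc1 hd1 hd1' fun x hx => ?_
    have := hyp x (hmem x hx)
    have h1 : 0 ≤ lam * (lam - h' x) := mul_nonneg hlam.le (by linarith)
    have := mul_nonneg (sq_nonneg ((h x)⁻¹)) (Real.exp_pos (lam * g x)).le
    nlinarith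
  · refine convexOn_of_hasDerivWithinAt2_nonneg hconv hc2 hd2 hd2' fun x hx => ?_
    have := hyp x (hmem x hx)
    have h1 : 0 ≤ (-lam) * (-lam - h' x) := by nlinarith
    have := mul_nonneg (sq_nonneg ((h x)⁻¹)) (Real.exp_pos (-lam * g x)).le
    nlinarith
  · refine concaveOn_of_hasDerivWithinAt2_nonpos hconv hc2 hd2 hd2' fun x hx => ?_
    have := hyp x (hmem x hx)
    have h1 : (-lam) * (-lam - h' x) ≤ 0 := by nlinarith
    have := mul_nonneg (sq_nonneg ((h x)⁻¹)) (Real.exp_pos (-lam * g x)).le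
    nlinarith
end

section
/- If h: [x_min, x_max] → ℝ+ is monotone increasing and g(x) := x_min/h(x_min) + ∫_{x_min}^x 1/h(y) dy, then g is concave on [x_min, x_max], and for any random variable X_{t+1} with E[X_{t+1} | F_t] ≤ X_t − h(X_t), one has E[g(X_t) − g(X_{t+1}) | F_t] ≥ 1. -/
open MeasureTheory

section vdjs_aux
variable {xmin xmax : ℝ} {h g : ℝ → ℝ}

lemma vdjs_ii (hint : IntegrableOn (fun y => (h y)⁻¹) (Set.Icc xmin xmax))
    {a b : ℝ} (ha : a ∈ Set.Icc xmin xmax) (hb : b ∈ Set.Icc xmin xmax) :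
    IntervalIntegrable (fun y => (h y)⁻¹) volume a b :=
  (hint.mono_set (Set.uIcc_subset_Icc ha hb)).intervalIntegrable

lemma vdjs_lb (hpos : ∀ x ∈ Set.Icc xmin xmax, 0 < h x)
    (hmono : MonotoneOn h (Set.Icc xmin xmax))
    (hint : IntegrableOn (fun y => (h y)⁻¹) (Set.Icc xmin xmax))
    {a b : ℝ} (ha : xmin ≤ a) (hab : a ≤ b) (hb : b ≤ xmax) :
    (b - a) * (h b)⁻¹ ≤ ∫ y in a..b, (h y)⁻¹ := by
  have hams : a ∈ Set.Icc xmin xmax := ⟨ha, hab.trans hb⟩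
  have hbms : b ∈ Set.Icc xmin xmax := ⟨ha.trans hab, hb⟩
  have H := intervalIntegral.integral_mono_on hab
    (intervalIntegrable_const (c := (h b)⁻¹)) (vdjs_ii hint hams hbms)
    (fun y hy => by
      have hyms : y ∈ Set.Icc xmin xmax := ⟨ha.trans hy.1, hy.2.trans hb⟩
      exact inv_anti₀ (hpos y hyms) (hmono hyms hbms hy.2))
  simpa [smul_eq_mul] using H

lemma vdjs_ub (hpos : ∀ x ∈ Set.Icc xmin xmax, 0 < h x)
    (hmono : MonotoneOn h (Set.Icc xmin xmax))
    (hint : IntegrableOn (fun y => (h y)⁻¹) (Set.Icc xmin xmax))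
    {a b : ℝ} (ha : xmin ≤ a) (hab : a ≤ b) (hb : b ≤ xmax) :
    (∫ y in a..b, (h y)⁻¹) ≤ (b - a) * (h a)⁻¹ := by
  have hams : a ∈ Set.Icc xmin xmax := ⟨ha, hab.trans hb⟩
  have hbms : b ∈ Set.Icc xmin xmax := ⟨ha.trans hab, hb⟩
  have H := intervalIntegral.integral_mono_on hab
    (vdjs_ii hint hams hbms) (intervalIntegrable_const (c := (h a)⁻¹))
    (fun y hy => by
      have hyms : y ∈ Set.Icc xmin xmax := ⟨ha.trans hy.1, hy.2.trans hb⟩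
      exact inv_anti₀ (hpos a hams) (hmono hams hyms hy.1))
  simpa [smul_eq_mul] using H

lemma vdjs_gdiff (hint : IntegrableOn (fun y => (h y)⁻¹) (Set.Icc xmin xmax))
    (hg : ∀ x, xmin ≤ x → g x = xmin / h xmin + ∫ y in xmin..x, (h y)⁻¹)
    {a b : ℝ} (ha : xmin ≤ a) (hab : a ≤ b) (hb : b ≤ xmax) :
    g b - g a = ∫ y in a..b, (h y)⁻¹ := by
  have hxm : xmin ∈ Set.Icc xmin xmax := ⟨le_rfl, ha.trans (hab.trans hb)⟩
  have hams : a ∈ Set.Icc xmin xmax := ⟨ha, hab.trans hb⟩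
  have hbms : b ∈ Set.Icc xmin xmax := ⟨ha.trans hab, hb⟩
  rw [hg a ha, hg b (ha.trans hab)]
  have := intervalIntegral.integral_interval_sub_left
    (vdjs_ii hint hxm hbms) (vdjs_ii hint hxm hams)
  linarith

lemma vdjs_key (hxmin : 0 < xmin) (hg0 : g 0 = 0)
    (hpos : ∀ x ∈ Set.Icc xmin xmax, 0 < h x)
    (hmono : MonotoneOn h (Set.Icc xmin xmax))
    (hint : IntegrableOn (fun y => (h y)⁻¹) (Set.Icc xmin xmax))
    (hg : ∀ x, xmin ≤ x → g x = xmin / h xmin + ∫ y in xmin..x, (h y)⁻¹)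
    {x y : ℝ} (hx : x ∈ Set.Icc xmin xmax) (hy : y = 0 ∨ y ∈ Set.Icc xmin xmax) :
    (x - y) * (h x)⁻¹ ≤ g x - g y := by
  have hxm : xmin ∈ Set.Icc xmin xmax := ⟨le_rfl, hx.1.trans hx.2⟩
  rcases hy with hy | hy
  · subst hy
    rw [hg0, sub_zero, sub_zero, hg x hx.1]
    have hlb : (x - xmin) * (h x)⁻¹ ≤ ∫ y in xmin..x, (h y)⁻¹ :=
      vdjs_lb hpos hmono hint le_rfl hx.1 hx.2
    have hinv : (h x)⁻¹ ≤ (h xmin)⁻¹ :=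
      inv_anti₀ (hpos xmin hxm) (hmono hxm hx hx.1)
    have h1 : xmin * (h x)⁻¹ ≤ xmin / h xmin := by
      rw [div_eq_mul_inv]
      exact mul_le_mul_of_nonneg_left hinv hxmin.le
    have h2 : x * (h x)⁻¹ = xmin * (h x)⁻¹ + (x - xmin) * (h x)⁻¹ := by ring
    linarith
  · rcases le_total y x with hyx | hxy
    · have d : g x - g y = ∫ z in y..x, (h z)⁻¹ := vdjs_gdiff hint hg hy.1 hyx hx.2
      rw [d]
      exact vdjs_lb hpos hmono hint hy.1 hyx hx.2
    · have d : g y - g x = ∫ z in x..y, (h z)⁻¹ := vdjs_gdiff hint hg hx.1 hxy hy.2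
      have hub : (∫ z in x..y, (h z)⁻¹) ≤ (y - x) * (h x)⁻¹ :=
        vdjs_ub hpos hmono hint hx.1 hxy hy.2
      have : (x - y) * (h x)⁻¹ = -((y - x) * (h x)⁻¹) := by ring
      linarith

lemma vdjs_concave (hpos : ∀ x ∈ Set.Icc xmin xmax, 0 < h x)
    (hmono : MonotoneOn h (Set.Icc xmin xmax))
    (hint : IntegrableOn (fun y => (h y)⁻¹) (Set.Icc xmin xmax))
    (hg : ∀ x, xmin ≤ x → g x = xmin / h xmin + ∫ y in xmin..x, (h y)⁻¹) :
    ConcaveOn ℝ (Set.Icc xmin xmax) g := by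
  refine concaveOn_of_slope_anti_adjacent (convex_Icc _ _) ?_
  intro x y z hx hz hxy hyz
  have hy : y ∈ Set.Icc xmin xmax := ⟨hx.1.trans hxy.le, hyz.le.trans hz.2⟩
  have d1 : g y - g x = ∫ w in x..y, (h w)⁻¹ := vdjs_gdiff hint hg hx.1 hxy.le hy.2
  have d2 : g z - g y = ∫ w in y..z, (h w)⁻¹ := vdjs_gdiff hint hg hy.1 hyz.le hz.2
  have h1 : (g z - g y) / (z - y) ≤ (h y)⁻¹ := by
    rw [div_le_iff₀ (by linarith)]
    have := vdjs_ub hpos hmono hint hy.1 hyz.le hz.2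
    rw [d2]; linarith
  have h2 : (h y)⁻¹ ≤ (g y - g x) / (y - x) := by
    rw [le_div_iff₀ (by linarith)]
    have := vdjs_lb hpos hmono hint hx.1 hxy.le hy.2
    rw [d1]; linarith
  linarith

end vdjs_aux

/-- Key step of the variable drift theorem. If `h : [xmin, xmax] → ℝ⁺` is monotone
increasing and `g x = xmin / h xmin + ∫_{xmin}^x 1/h(y) dy`, then `g` is concave
on `[xmin, xmax]`; moreover, for a process `(X t)` over `S ⊆ {0} ∪ [xmin, xmax]`,
if `E[X (t+1) | F_t] ≤ X t − h (X t)` (on `X t ≥ xmin`) then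
`E[g (X t) − g (X (t+1)) | F_t] ≥ 1` (on `X t ≥ xmin`). -/
theorem variable_drift_jensen_step
    {Ω : Type*} [MeasurableSpace Ω] (μ : Measure Ω) [IsProbabilityMeasure μ]
    (X : ℕ → Ω → ℝ) (hX : ∀ t, StronglyMeasurable (X t))
    (xmin xmax : ℝ) (hxmin : 0 < xmin)
    (hstate : ∀ t ω, X t ω = 0 ∨ X t ω ∈ Set.Icc xmin xmax)
    (h : ℝ → ℝ) (hpos : ∀ x ∈ Set.Icc xmin xmax, 0 < h x)
    (hmono : MonotoneOn h (Set.Icc xmin xmax))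
    (hint : IntegrableOn (fun y => (h y)⁻¹) (Set.Icc xmin xmax))
    (g : ℝ → ℝ) (hg0 : g 0 = 0)
    (hg : ∀ x, xmin ≤ x → g x = xmin / h xmin + ∫ y in xmin..x, (h y)⁻¹) :
    ConcaveOn ℝ (Set.Icc xmin xmax) g ∧
    (∀ t, (∀ᵐ ω ∂μ, xmin ≤ X t ω →
        (μ[X (t + 1) | (MeasureTheory.Filtration.natural X hX) t]) ω
          ≤ X t ω - h (X t ω)) →
      ∀ᵐ ω ∂μ, xmin ≤ X t ω →
        1 ≤ (μ[(fun ω' => g (X t ω') - g (X (t + 1) ω')) |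
          (MeasureTheory.Filtration.natural X hX) t]) ω) := by
  refine ⟨vdjs_concave hpos hmono hint hg, ?_⟩
  intro t hdrift
  by_cases hle : xmin ≤ xmax
  swap
  · filter_upwards with ω hω
    exfalso
    rcases hstate t ω with h0 | hI
    · rw [h0] at hω; linarith
    · rw [Set.Icc_eq_empty hle] at hI; exact Set.notMem_empty _ hI
  have hxmE : xmin ∈ Set.Icc xmin xmax := ⟨le_rfl, hle⟩
  have hxME : xmax ∈ Set.Icc xmin xmax := ⟨hle, le_rfl⟩
  have hgmono : ∀ a b : ℝ, xmin ≤ a → a ≤ b → b ≤ xmax → g a ≤ g b := by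
    intro a b ha hab hb
    have d := vdjs_gdiff hint hg ha hab hb
    have hlb := vdjs_lb hpos hmono hint ha hab hb
    have hpb : 0 < h b := hpos b ⟨ha.trans hab, hb⟩
    nlinarith [inv_nonneg.mpr hpb.le, sub_nonneg.mpr hab]
  have hgnn : ∀ x ∈ Set.Icc xmin xmax, 0 ≤ g x := by
    intro x hx
    have hk := vdjs_key hxmin hg0 hpos hmono hint hg hx (Or.inl rfl)
    have hpx := hpos x hx
    rw [hg0, sub_zero, sub_zero] at hk
    nlinarith [inv_nonneg.mpr hpx.le, hx.1, hxmin]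
  have hgval : ∀ s ω, 0 ≤ g (X s ω) ∧ g (X s ω) ≤ g xmax := by
    intro s ω
    rcases hstate s ω with h0 | hI
    · rw [h0, hg0]
      exact ⟨le_rfl, hgnn xmax hxME⟩
    · exact ⟨hgnn _ hI, hgmono _ _ hI.1 hI.2 le_rfl⟩
  -- measurable modification of g
  have hg'mono : Monotone (fun x => if xmin ≤ x then g (min x xmax) else 0) := by
    intro a b hab
    simp only
    by_cases ha : xmin ≤ a
    · rw [if_pos ha, if_pos (ha.trans hab)]
      exact hgmono _ _ (le_min ha hle) (min_le_min hab le_rfl) (min_le_right _ _)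
    · rw [if_neg ha]
      by_cases hb : xmin ≤ b
      · rw [if_pos hb]
        exact hgnn _ ⟨le_min hb hle, min_le_right _ _⟩
      · rw [if_neg hb]
  have hg'X : ∀ s ω, (fun x => if xmin ≤ x then g (min x xmax) else 0) (X s ω) = g (X s ω) := by
    intro s ω
    rcases hstate s ω with h0 | hI
    · rw [h0]; simp [not_le.mpr hxmin, hg0]
    · simp only [if_pos hI.1, min_eq_left hI.2]
  have hgXmeas : ∀ s, Measurable (fun ω => g (X s ω)) := by
    intro s
    have he : (fun ω => g (X s ω))
        = fun ω => (fun x => if xmin ≤ x then g (min x xmax) else 0) (X s ω) :=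
      funext fun ω => (hg'X s ω).symm
    rw [he]
    exact hg'mono.measurable.comp (hX s).measurable
  -- measurable modification of 1/h
  have hmm : ∀ x : ℝ, max xmin (min x xmax) ∈ Set.Icc xmin xmax :=
    fun x => ⟨le_max_left _ _, max_le hle (min_le_right _ _)⟩
  have hψanti : Antitone (fun x => (h (max xmin (min x xmax)))⁻¹) := by
    intro a b hab
    exact inv_anti₀ (hpos _ (hmm a))
      (hmono (hmm a) (hmm b) (max_le_max le_rfl (min_le_min hab le_rfl)))
  set φ : ℝ → ℝ := (Set.Ici xmin).indicator (fun x => (h (max xmin (min x xmax)))⁻¹)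
    with hφ_def
  have hφmeas : Measurable φ := hψanti.measurable.indicator measurableSet_Ici
  have hφnn : ∀ x, 0 ≤ φ x := fun x =>
    Set.indicator_nonneg (fun y _ => inv_nonneg.mpr (hpos _ (hmm y)).le) x
  have hφbd : ∀ x, φ x ≤ (h xmin)⁻¹ := by
    intro x
    rw [hφ_def]
    by_cases hx : x ∈ Set.Ici xmin
    · rw [Set.indicator_of_mem hx]
      exact inv_anti₀ (hpos xmin hxmE) (hmono hxmE (hmm x) (le_max_left _ _))
    · rw [Set.indicator_of_notMem hx]
      exact inv_nonneg.mpr (hpos xmin hxmE).le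
  have hφIcc : ∀ x ∈ Set.Icc xmin xmax, φ x = (h x)⁻¹ := by
    intro x hx
    rw [hφ_def, Set.indicator_of_mem (show x ∈ Set.Ici xmin from hx.1)]
    show (h (max xmin (min x xmax)))⁻¹ = (h x)⁻¹
    rw [min_eq_left hx.2, max_eq_right hx.1]
  -- integrability
  have hXb : ∀ s ω, ‖X s ω‖ ≤ xmax := by
    intro s ω
    rcases hstate s ω with h0 | hI
    · rw [h0, norm_zero]; linarith
    · rw [Real.norm_eq_abs, abs_of_nonneg (by linarith [hI.1])]; exact hI.2
  have hXint : ∀ s, Integrable (X s) μ :=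
    fun s => (integrable_const xmax).mono' (hX s).aestronglyMeasurable (ae_of_all _ (hXb s))
  set F : Ω → ℝ := fun ω' => g (X t ω') - g (X (t + 1) ω') with hF_def
  have hFint : Integrable F μ := by
    refine (integrable_const (2 * g xmax)).mono'
      (((hgXmeas t).sub (hgXmeas (t + 1))).aestronglyMeasurable) (ae_of_all _ ?_)
    intro ω
    obtain ⟨ha1, ha2⟩ := hgval t ω
    obtain ⟨ha3, ha4⟩ := hgval (t + 1) ω
    rw [hF_def, Real.norm_eq_abs, abs_le]
    constructor <;> simp only <;> linarith
  set A : Set Ω := {ω | xmin ≤ X t ω} with hA_def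
  set G : Ω → ℝ := (fun ω => φ (X t ω)) * (X t - X (t + 1)) with hG_def
  have hGint : Integrable G μ := by
    refine (integrable_const ((h xmin)⁻¹ * (2 * xmax))).mono'
      (((hφmeas.comp (hX t).measurable).mul
        ((hX t).measurable.sub (hX (t + 1)).measurable)).aestronglyMeasurable)
      (ae_of_all _ ?_)
    intro ω
    rw [hG_def]
    simp only [Pi.mul_apply, Pi.sub_apply, Real.norm_eq_abs, abs_mul]
    have h1 := hXb t ω
    have h2 := hXb (t + 1) ω
    rw [Real.norm_eq_abs] at h1 h2
    have habs : |X t ω - X (t + 1) ω| ≤ 2 * xmax := by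
      have hb1 := abs_le.mp h1
      have hb2 := abs_le.mp h2
      rw [abs_sub_le_iff]
      constructor <;> linarith
    have hφa : |φ (X t ω)| ≤ (h xmin)⁻¹ := by
      rw [abs_of_nonneg (hφnn _)]; exact hφbd _
    exact mul_le_mul hφa habs (abs_nonneg _) (inv_nonneg.mpr (hpos xmin hxmE).le)
  have hm : (MeasureTheory.Filtration.natural X hX) t ≤ _ := (MeasureTheory.Filtration.natural X hX).le t
  haveI : SigmaFinite (μ.trim hm) := inferInstance
  have hXtm : StronglyMeasurable[(MeasureTheory.Filtration.natural X hX) t] (X t) := MeasureTheory.Filtration.stronglyAdapted_natural hX t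
  have hA : MeasurableSet[(MeasureTheory.Filtration.natural X hX) t] A := hXtm.measurable measurableSet_Ici
  have hF'int : Integrable (A.indicator F) μ := hFint.indicator (hm A hA)
  have hGF' : ∀ ω, G ω ≤ A.indicator F ω := by
    intro ω
    by_cases hωA : ω ∈ A
    · have hxt : X t ω ∈ Set.Icc xmin xmax := by
        rcases hstate t ω with h0 | hI
        · exact absurd (show xmin ≤ X t ω from hωA) (by rw [h0]; exact not_le.mpr hxmin)
        · exact hI
      rw [Set.indicator_of_mem hωA, hG_def, hF_def]
      simp only [Pi.mul_apply, Pi.sub_apply]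
      rw [hφIcc _ hxt, mul_comm]
      exact vdjs_key hxmin hg0 hpos hmono hint hg hxt (hstate (t + 1) ω)
    · rw [Set.indicator_of_notMem hωA, hG_def]
      simp only [Pi.mul_apply, Pi.sub_apply]
      have hφ0 : φ (X t ω) = 0 := by
        rw [hφ_def]
        exact Set.indicator_of_notMem (show X t ω ∉ Set.Ici xmin from fun hc => hωA hc) _
      rw [hφ0, zero_mul]
  have hφm : StronglyMeasurable[(MeasureTheory.Filtration.natural X hX) t] (fun ω => φ (X t ω)) :=
    (hφmeas.comp hXtm.measurable).stronglyMeasurable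
  have hsubint : Integrable (X t - X (t + 1)) μ := (hXint t).sub (hXint (t + 1))
  have h1 : μ[G|(MeasureTheory.Filtration.natural X hX) t] ≤ᵐ[μ] μ[A.indicator F|(MeasureTheory.Filtration.natural X hX) t] :=
    condExp_mono hGint hF'int (ae_of_all _ hGF')
  have h2 : μ[A.indicator F|(MeasureTheory.Filtration.natural X hX) t] =ᵐ[μ] A.indicator (μ[F|(MeasureTheory.Filtration.natural X hX) t]) := condExp_indicator hFint hA
  have h3 : μ[G|(MeasureTheory.Filtration.natural X hX) t] =ᵐ[μ] (fun ω => φ (X t ω)) * μ[X t - X (t + 1)|(MeasureTheory.Filtration.natural X hX) t] :=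
    condExp_mul_of_stronglyMeasurable_left hφm (hG_def ▸ hGint) hsubint
  have h4 : μ[X t - X (t + 1)|(MeasureTheory.Filtration.natural X hX) t] =ᵐ[μ] fun ω => X t ω - (μ[X (t + 1)|(MeasureTheory.Filtration.natural X hX) t]) ω := by
    have e1 := condExp_sub (μ := μ) (m := (MeasureTheory.Filtration.natural X hX) t) (hXint t) (hXint (t + 1))
    have e2 : μ[X t|(MeasureTheory.Filtration.natural X hX) t] = X t := condExp_of_stronglyMeasurable hm hXtm (hXint t)
    filter_upwards [e1] with ω hω
    rw [hω, Pi.sub_apply, e2]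
  filter_upwards [h1, h2, h3, h4, hdrift] with ω hh1 hh2 hh3 hh4 hd hx
  have hωA : ω ∈ A := hx
  have hxt : X t ω ∈ Set.Icc xmin xmax := by
    rcases hstate t ω with h0 | hI
    · exact absurd hx (by rw [h0]; exact not_le.mpr hxmin)
    · exact hI
  have hpx : 0 < h (X t ω) := hpos _ hxt
  have hstep : h (X t ω) ≤ X t ω - (μ[X (t + 1)|(MeasureTheory.Filtration.natural X hX) t]) ω := by
    have := hd hx; linarith
  calc (1 : ℝ) = (h (X t ω))⁻¹ * h (X t ω) := (inv_mul_cancel₀ hpx.ne').symm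
    _ ≤ (h (X t ω))⁻¹ * (X t ω - (μ[X (t + 1)|(MeasureTheory.Filtration.natural X hX) t]) ω) :=
        mul_le_mul_of_nonneg_left hstep (inv_nonneg.mpr hpx.le)
    _ = φ (X t ω) * ((μ[X t - X (t + 1)|(MeasureTheory.Filtration.natural X hX) t]) ω) := by rw [hφIcc _ hxt, hh4]
    _ = ((fun ω => φ (X t ω)) * μ[X t - X (t + 1)|(MeasureTheory.Filtration.natural X hX) t]) ω := rfl
    _ = (μ[G|(MeasureTheory.Filtration.natural X hX) t]) ω := hh3.symm
    _ ≤ (μ[A.indicator F|(MeasureTheory.Filtration.natural X hX) t]) ω := hh1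
    _ = (A.indicator (μ[F|(MeasureTheory.Filtration.natural X hX) t])) ω := hh2
    _ = (μ[F|(MeasureTheory.Filtration.natural X hX) t]) ω := Set.indicator_of_mem hωA _
end

section
/- In the setting of Sudholt's fitness-level lower bound, for each level i and the potential g(m−i) = 1/u_i + χ ∑_{j=i+1}^{m−1} 1/u_j, the one-step drift satisfies E[g(X_t) − g(X_{t+1}) | X_t = m−i] ≤ 1; in particular, the key inequality ∑_{ℓ=i+1}^m γ_{i,ℓ} · χ · ∑_{j=i+1}^ℓ 1/u_j ≤ ∑_{ℓ=i+1}^m γ_{i,ℓ}/u_ℓ holds whenever γ_{i,j} ≥ χ ∑_{k=j}^m γ_{i,k} for all j > i. -/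
open Finset

lemma sum_swap_tri (a m : ℕ) (f : ℕ → ℕ → ℝ) :
    ∑ ℓ ∈ Icc a m, ∑ j ∈ Icc a ℓ, f ℓ j = ∑ j ∈ Icc a m, ∑ ℓ ∈ Icc j m, f ℓ j := by
  calc ∑ ℓ ∈ Icc a m, ∑ j ∈ Icc a ℓ, f ℓ j
      = ∑ ℓ ∈ Icc a m, ∑ j ∈ Icc a m, if j ≤ ℓ then f ℓ j else 0 := by
        refine sum_congr rfl fun ℓ hℓ => ?_
        rw [← sum_filter]
        congr 1
        simp only [mem_Icc] at hℓ
        ext x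
        simp only [mem_filter, mem_Icc]
        omega
    _ = ∑ j ∈ Icc a m, ∑ ℓ ∈ Icc a m, if j ≤ ℓ then f ℓ j else 0 := sum_comm
    _ = ∑ j ∈ Icc a m, ∑ ℓ ∈ Icc j m, f ℓ j := by
        refine sum_congr rfl fun j hj => ?_
        rw [← sum_filter]
        congr 1
        simp only [mem_Icc] at hj
        ext x
        simp only [mem_filter, mem_Icc]
        omega

lemma sum_swap_tri' (a m : ℕ) (f : ℕ → ℕ → ℝ) :
    ∑ ℓ ∈ Icc a m, ∑ j ∈ (Ico a m).filter (· ≤ ℓ), f ℓ j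
      = ∑ j ∈ Ico a m, ∑ ℓ ∈ Icc j m, f ℓ j := by
  calc ∑ ℓ ∈ Icc a m, ∑ j ∈ (Ico a m).filter (· ≤ ℓ), f ℓ j
      = ∑ ℓ ∈ Icc a m, ∑ j ∈ Ico a m, if j ≤ ℓ then f ℓ j else 0 :=
        sum_congr rfl fun ℓ _ => sum_filter _ _
    _ = ∑ j ∈ Ico a m, ∑ ℓ ∈ Icc a m, if j ≤ ℓ then f ℓ j else 0 := sum_comm
    _ = ∑ j ∈ Ico a m, ∑ ℓ ∈ Icc j m, f ℓ j := by
        refine sum_congr rfl fun j hj => ?_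
        rw [← sum_filter]
        congr 1
        simp only [mem_Ico] at hj
        ext x
        simp only [mem_filter, mem_Icc]
        omega

/-- Drift computation in Sudholt's fitness-level lower bound. With the potential
`g(m−i) = 1/u i + χ ∑_{j=i+1}^{m−1} 1/u j` (and `g 0 = 0`, i.e. potential `0` at
level `m`), transition probabilities `u i * γ i ℓ` from level `i` to `ℓ > i`,
`∑_{ℓ=i+1}^m γ i ℓ = 1` and `γ i j ≥ χ ∑_{k=j}^m γ i k` for `j > i`, the one-step
drift of the potential from level `i` is at most `1`; in particular the key
inequality `∑_{ℓ=i+1}^m γ i ℓ · χ · ∑_{j=i+1}^ℓ 1/u j ≤ ∑_{ℓ=i+1}^m γ i ℓ / u ℓ`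
holds. -/
theorem fitness_levels_drift_at_most_one
    (m i : ℕ) (hi1 : 1 ≤ i) (him : i < m)
    (u : ℕ → ℝ) (hu : ∀ j, 1 ≤ j → j ≤ m → 0 < u j)
    (γ : ℕ → ℕ → ℝ) (hγnonneg : ∀ j, 0 ≤ γ i j)
    (hγsum : ∑ ℓ ∈ Finset.Icc (i + 1) m, γ i ℓ = 1)
    (χ : ℝ) (hχ0 : 0 ≤ χ) (hχ1 : χ ≤ 1)
    (hχ : ∀ j, i < j → j ≤ m → χ * ∑ k ∈ Finset.Icc j m, γ i k ≤ γ i j)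
    (pot : ℕ → ℝ)
    (hpot : ∀ j, 1 ≤ j → j < m →
      pot j = 1 / u j + χ * ∑ k ∈ Finset.Ico (j + 1) m, 1 / u k)
    (hpotm : pot m = 0) :
    (∑ ℓ ∈ Finset.Icc (i + 1) m, u i * γ i ℓ * (pot i - pot ℓ) ≤ 1) ∧
    (∑ ℓ ∈ Finset.Icc (i + 1) m, γ i ℓ * (χ * ∑ j ∈ Finset.Icc (i + 1) ℓ, 1 / u j)
      ≤ ∑ ℓ ∈ Finset.Icc (i + 1) m, γ i ℓ / u ℓ) := by
  have hui : 0 < u i := hu i hi1 him.le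
  -- Part 2: the key inequality, via summation rearrangement.
  have key : ∑ ℓ ∈ Finset.Icc (i + 1) m, γ i ℓ * (χ * ∑ j ∈ Finset.Icc (i + 1) ℓ, 1 / u j)
      ≤ ∑ ℓ ∈ Finset.Icc (i + 1) m, γ i ℓ / u ℓ := by
    have h1 : ∑ ℓ ∈ Icc (i+1) m, γ i ℓ * (χ * ∑ j ∈ Icc (i+1) ℓ, 1 / u j)
        = ∑ j ∈ Icc (i+1) m, (∑ ℓ ∈ Icc j m, γ i ℓ) * χ * (1 / u j) := by
      rw [show (∑ ℓ ∈ Icc (i+1) m, γ i ℓ * (χ * ∑ j ∈ Icc (i+1) ℓ, 1 / u j))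
          = ∑ ℓ ∈ Icc (i+1) m, ∑ j ∈ Icc (i+1) ℓ, γ i ℓ * χ * (1 / u j) from
        sum_congr rfl fun ℓ _ => by rw [← mul_assoc, mul_sum]]
      rw [sum_swap_tri]
      exact sum_congr rfl fun j _ => by rw [← sum_mul, ← sum_mul]
    rw [h1]
    refine sum_le_sum fun j hj => ?_
    simp only [mem_Icc] at hj
    have huj : 0 < u j := hu j (by omega) hj.2
    have hvj : 0 ≤ 1 / u j := by positivity
    calc (∑ ℓ ∈ Icc j m, γ i ℓ) * χ * (1 / u j)
        = (χ * ∑ ℓ ∈ Icc j m, γ i ℓ) * (1 / u j) := by ring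
      _ ≤ γ i j * (1 / u j) :=
          mul_le_mul_of_nonneg_right (hχ j (by omega) hj.2) hvj
      _ = γ i j / u j := mul_one_div _ _
  refine ⟨?_, key⟩
  -- Part 1: the drift bound.
  set q : ℕ → ℝ := fun ℓ => if ℓ = m then 0 else 1 / u ℓ with hq
  have hpi := hpot i hi1 him
  -- exact value of the potential difference
  have hpd : ∀ ℓ ∈ Icc (i+1) m, pot i - pot ℓ
      = 1 / u i - q ℓ + χ * ∑ j ∈ (Ico (i+1) m).filter (· ≤ ℓ), 1 / u j := by
    intro ℓ hℓ
    simp only [mem_Icc] at hℓ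
    rcases eq_or_lt_of_le hℓ.2 with he | hlt
    · subst he
      have hf : (Ico (i+1) ℓ).filter (· ≤ ℓ) = Ico (i+1) ℓ := by
        apply filter_true_of_mem
        intro x hx
        simp only [mem_Ico] at hx
        omega
      rw [hpotm, hpi, hf]
      simp [hq]
    · have hf : (Ico (i+1) m).filter (· ≤ ℓ) = Ico (i+1) (ℓ+1) := by
        ext x
        simp only [mem_filter, mem_Ico]
        omega
      have hsplit : ∑ k ∈ Ico (i+1) (ℓ+1), 1 / u k + ∑ k ∈ Ico (ℓ+1) m, 1 / u k
          = ∑ k ∈ Ico (i+1) m, 1 / u k :=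
        sum_Ico_consecutive _ (by omega) (by omega)
      have hqℓ : q ℓ = 1 / u ℓ := by simp [hq, Nat.ne_of_lt hlt]
      rw [hpi, hpot ℓ (by omega) hlt, hf, hqℓ, ← hsplit]
      ring
  -- rewrite the drift sum
  have hterm : ∀ ℓ ∈ Icc (i+1) m, u i * γ i ℓ * (pot i - pot ℓ)
      = γ i ℓ + u i * (γ i ℓ * (χ * ∑ j ∈ (Ico (i+1) m).filter (· ≤ ℓ), 1 / u j)
          - γ i ℓ * q ℓ) := by
    intro ℓ hℓ
    rw [hpd ℓ hℓ]
    field_simp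
    ring
  rw [sum_congr rfl hterm, sum_add_distrib, hγsum, ← mul_sum, sum_sub_distrib]
  -- bound the χ-part by the q-part
  have hA : ∑ ℓ ∈ Icc (i+1) m, γ i ℓ * (χ * ∑ j ∈ (Ico (i+1) m).filter (· ≤ ℓ), 1 / u j)
      ≤ ∑ ℓ ∈ Icc (i+1) m, γ i ℓ * q ℓ := by
    have hB : ∑ ℓ ∈ Icc (i+1) m, γ i ℓ * q ℓ = ∑ ℓ ∈ Ico (i+1) m, γ i ℓ * (1 / u ℓ) := by
      rw [← Finset.Ico_add_one_right_eq_Icc (i+1) m, Finset.sum_Ico_succ_top (by omega : i + 1 ≤ m)]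
      have : q m = 0 := by simp [hq]
      rw [this, mul_zero, add_zero]
      refine sum_congr rfl fun ℓ hℓ => ?_
      simp only [mem_Ico] at hℓ
      have : q ℓ = 1 / u ℓ := by simp [hq, Nat.ne_of_lt hℓ.2]
      rw [this]
    rw [hB]
    have h1 : ∑ ℓ ∈ Icc (i+1) m, γ i ℓ * (χ * ∑ j ∈ (Ico (i+1) m).filter (· ≤ ℓ), 1 / u j)
        = ∑ j ∈ Ico (i+1) m, (∑ ℓ ∈ Icc j m, γ i ℓ) * χ * (1 / u j) := by
      rw [show (∑ ℓ ∈ Icc (i+1) m, γ i ℓ * (χ * ∑ j ∈ (Ico (i+1) m).filter (· ≤ ℓ), 1 / u j))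
          = ∑ ℓ ∈ Icc (i+1) m, ∑ j ∈ (Ico (i+1) m).filter (· ≤ ℓ), γ i ℓ * χ * (1 / u j) from
        sum_congr rfl fun ℓ _ => by rw [← mul_assoc, mul_sum]]
      rw [sum_swap_tri']
      exact sum_congr rfl fun j _ => by rw [← sum_mul, ← sum_mul]
    rw [h1]
    refine sum_le_sum fun j hj => ?_
    simp only [mem_Ico] at hj
    have huj : 0 < u j := hu j (by omega) (by omega)
    have hvj : 0 ≤ 1 / u j := by positivity
    calc (∑ ℓ ∈ Icc j m, γ i ℓ) * χ * (1 / u j)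
        = (χ * ∑ ℓ ∈ Icc j m, γ i ℓ) * (1 / u j) := by ring
      _ ≤ γ i j * (1 / u j) :=
          mul_le_mul_of_nonneg_right (hχ j (by omega) (by omega)) hvj
  have : u i * ((∑ ℓ ∈ Icc (i+1) m, γ i ℓ * (χ * ∑ j ∈ (Ico (i+1) m).filter (· ≤ ℓ), 1 / u j))
      - ∑ ℓ ∈ Icc (i+1) m, γ i ℓ * q ℓ) ≤ 0 :=
    mul_nonpos_of_nonneg_of_nonpos hui.le (by linarith)
  linarith
end

section
/- Let X_t denote the number of zero-bits of the current search point of the (1+1) EA on OneMax over {0,1}^n (standard bit mutation with rate 1/n, elitist selection). Then for 1 ≤ x ≤ n: (1 − 1/n)^{n−x} · (x/n) ≤ E[X_t − X_{t+1} | X_t = x] ≤ ((1 − 1/n)(1 + x/(n−1)²))^{n−x} · (x/n). -/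
/-- Number of zero-bits of a search point. -/
def zeros {n : ℕ} (p : Fin n → Bool) : ℕ :=
  (Finset.univ.filter fun i => p i = false).card

/-- Hamming weight of a flip-mask. -/
def flipWeight {n : ℕ} (b : Fin n → Bool) : ℕ :=
  (Finset.univ.filter fun i => b i = true).card

/-- Offspring obtained by flipping the bits indicated by the mask `b`. -/
def mutate {n : ℕ} (p b : Fin n → Bool) : Fin n → Bool :=
  fun i => xor (p i) (b i)

/-- One step of the (1+1) EA on OneMax (elitist selection: the offspring is
accepted iff its OneMax-value is at least as large, i.e. iff it has at most as
many zeros). -/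
def oneMaxStep {n : ℕ} (p b : Fin n → Bool) : Fin n → Bool :=
  if zeros (mutate p b) ≤ zeros p then mutate p b else p

/-- Expected one-step decrease of the number of zeros of the (1+1) EA on OneMax
(standard bit mutation with rate `1/n`), i.e. `E[X t − X (t+1) | X t = zeros p]`
for a current search point `p`. -/
noncomputable def oneMaxDrift {n : ℕ} (p : Fin n → Bool) : ℝ :=
  ∑ b : Fin n → Bool,
    ((1 / n : ℝ) ^ flipWeight b * (1 - 1 / n) ^ (n - flipWeight b)) *
      ((zeros p : ℝ) - (zeros (oneMaxStep p b) : ℝ))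

-- key reduction lemma
theorem drift_eq (n x : ℕ) (hxn : x ≤ n) (p : Fin n → Bool) (hp : zeros p = x) :
    oneMaxDrift p = ∑ S ∈ (Finset.univ.filter fun i => p i = false).powerset,
      ∑ T ∈ (Finset.univ.filter fun i => p i = true).powerset,
        ((1 / n : ℝ) ^ (S.card + T.card) * (1 - 1 / n) ^ (n - (S.card + T.card))) *
          (if T.card ≤ S.card then (S.card : ℝ) - T.card else 0) := by
  classical
  set Z : Finset (Fin n) := Finset.univ.filter fun i => p i = false with hZ
  set O : Finset (Fin n) := Finset.univ.filter fun i => p i = true with hO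
  have hZcard : Z.card = x := hp
  have hmemZ : ∀ i, i ∈ Z ↔ p i = false := by intro i; simp [hZ]
  have hmemO : ∀ i, i ∈ O ↔ p i = true := by intro i; simp [hO]
  have hdisjZO : Disjoint Z O := by
    rw [Finset.disjoint_left]
    intro i hiZ hiO
    rw [hmemZ] at hiZ; rw [hmemO] at hiO; simp [hiZ] at hiO
  -- value of a term for b = indicator of S ∪ T
  have hval : ∀ S T : Finset (Fin n), S ⊆ Z → T ⊆ O →
      ((1 / n : ℝ) ^ flipWeight (fun i => decide (i ∈ S ∪ T)) *
        (1 - 1 / n) ^ (n - flipWeight (fun i => decide (i ∈ S ∪ T)))) *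
        ((zeros p : ℝ) - (zeros (oneMaxStep p (fun i => decide (i ∈ S ∪ T))) : ℝ))
      = ((1 / n : ℝ) ^ (S.card + T.card) * (1 - 1 / n) ^ (n - (S.card + T.card))) *
          (if T.card ≤ S.card then (S.card : ℝ) - T.card else 0) := by
    intro S T hS hT
    have hSx : S.card ≤ x := hZcard ▸ Finset.card_le_card hS
    have hTnotZ : ∀ i ∈ T, i ∉ S := fun i hi =>
      fun hiS => (Finset.disjoint_left.mp hdisjZO (hS hiS)) (hT hi)
    have hdisjST : Disjoint S T := by
      rw [Finset.disjoint_right]; exact hTnotZ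
    have hfw : flipWeight (fun i => decide (i ∈ S ∪ T)) = S.card + T.card := by
      have : (Finset.univ.filter fun i => decide (i ∈ S ∪ T) = true) = S ∪ T := by
        ext i; simp
      rw [flipWeight, this, Finset.card_union_of_disjoint hdisjST]
    have hzm : zeros (mutate p (fun i => decide (i ∈ S ∪ T))) = (x - S.card) + T.card := by
      have hfe : (Finset.univ.filter fun i =>
          mutate p (fun i => decide (i ∈ S ∪ T)) i = false) = (Z \ S) ∪ T := by
        ext i
        have hiT : p i = false → i ∉ T := fun hpf hTi => by
          have h2 := hT hTi; rw [hmemO] at h2; rw [hpf] at h2; exact absurd h2 (by simp)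
        have hiS : p i = true → i ∉ S := fun hpt hiS => by
          have := hS hiS; rw [hmemZ] at this; simp [hpt] at this
        simp only [Finset.mem_filter, Finset.mem_univ, true_and, Finset.mem_union,
          Finset.mem_sdiff, mutate, hmemZ]
        cases hpi : p i with
        | false =>
          have hT' := hiT hpi
          simp [hT']
        | true =>
          have hS' := hiS hpi
          simp [hS']
      rw [zeros, hfe, Finset.card_union_of_disjoint, Finset.card_sdiff_of_subset hS, hZcard]
      exact Finset.disjoint_of_subset_left (Finset.sdiff_subset) <|
        Finset.disjoint_of_subset_right hT hdisjZO
    rw [hfw, hp]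
    congr 1
    simp only [oneMaxStep]
    rw [apply_ite zeros, hzm, hp]
    by_cases hts : T.card ≤ S.card
    · rw [if_pos (by omega), if_pos hts]
      have : (x - S.card + T.card : ℕ) = x + T.card - S.card := by omega
      rw [this, Nat.cast_sub (by omega), Nat.cast_add]
      ring
    · rw [if_neg (by omega), if_neg hts]
      simp
  -- bijection
  rw [oneMaxDrift, ← Finset.sum_product']
  rw [show (Finset.univ : Finset (Fin n → Bool)) = Finset.univ from rfl]
  refine Finset.sum_nbij' (i := fun b => (Z.filter fun a => b a = true, O.filter fun a => b a = true))
    (j := fun ST => fun i => decide (i ∈ ST.1 ∪ ST.2)) ?_ ?_ ?_ ?_ ?_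
  · intro b _
    simp only [Finset.mem_product, Finset.mem_powerset]
    exact ⟨Finset.filter_subset _ _, Finset.filter_subset _ _⟩
  · intro ST _; exact Finset.mem_univ _
  · intro b _
    funext i
    by_cases hpi : p i = false
    · have hiZ : i ∈ Z := (hmemZ i).mpr hpi
      have hiO : i ∉ O := by rw [hmemO]; simp [hpi]
      simp [hiZ, hiO]
    · have hiO : i ∈ O := (hmemO i).mpr (by revert hpi; cases p i <;> simp)
      have hiZ : i ∉ Z := by rw [hmemZ]; revert hpi; cases p i <;> simp
      simp [hiZ, hiO]
  · rintro ⟨S, T⟩ hST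
    simp only [Finset.mem_product, Finset.mem_powerset] at hST
    obtain ⟨hS, hT⟩ := hST
    have h1 : Z.filter (fun a => decide (a ∈ S ∪ T) = true) = S := by
      ext i
      simp only [Finset.mem_filter, decide_eq_true_eq, Finset.mem_union]
      constructor
      · rintro ⟨hiZ, hiS | hiT⟩
        · exact hiS
        · exact absurd (hT hiT) (fun h => (Finset.disjoint_left.mp hdisjZO hiZ) h)
      · intro hiS; exact ⟨hS hiS, Or.inl hiS⟩
    have h2 : O.filter (fun a => decide (a ∈ S ∪ T) = true) = T := by
      ext i
      simp only [Finset.mem_filter, decide_eq_true_eq, Finset.mem_union]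
      constructor
      · rintro ⟨hiO, hiS | hiT⟩
        · exact absurd (hS hiS) (fun h => (Finset.disjoint_right.mp hdisjZO hiO) h)
        · exact hiT
      · intro hiT; exact ⟨hT hiT, Or.inr hiT⟩
    simp only [h1, h2]
  · intro b _
    have hS := Finset.filter_subset (fun a => b a = true) Z
    have hT := Finset.filter_subset (fun a => b a = true) O
    have := hval _ _ hS hT
    -- rewrite b as the indicator
    have hb : (fun i => decide (i ∈ Z.filter (fun a => b a = true) ∪ O.filter (fun a => b a = true))) = b := by
      funext i
      by_cases hpi : p i = false
      · have hiZ : i ∈ Z := (hmemZ i).mpr hpi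
        have hiO : i ∉ O := by rw [hmemO]; simp [hpi]
        simp [hiZ, hiO]
      · have hiO : i ∈ O := (hmemO i).mpr (by revert hpi; cases p i <;> simp)
        have hiZ : i ∉ Z := by rw [hmemZ]; revert hpi; cases p i <;> simp
        simp [hiZ, hiO]
    rw [hb] at this
    simpa using this

open Finset in
lemma sum_powerset_card_real {ι : Type*} [DecidableEq ι] (Z : Finset ι) (G : ℕ → ℝ) :
    ∑ S ∈ Z.powerset, G S.card = ∑ a ∈ Finset.range (Z.card + 1), (Z.card.choose a : ℝ) * G a := by
  rw [Finset.sum_powerset]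
  refine Finset.sum_congr rfl fun j hj => ?_
  rw [Finset.sum_congr rfl
    (fun t ht => by rw [(Finset.mem_powersetCard.mp ht).2] :
      ∀ t ∈ Finset.powersetCard j Z, G t.card = G j)]
  rw [Finset.sum_const, Finset.card_powersetCard, nsmul_eq_mul]

lemma sub_le_choose (a b : ℕ) : a - b ≤ a.choose (b + 1) := by
  induction b generalizing a with
  | zero => simp
  | succ b ih =>
    cases a with
    | zero => simp
    | succ a =>
      calc a + 1 - (b + 1) = a - b := by omega
        _ ≤ a.choose (b + 1) := ih a
        _ ≤ (a + 1).choose (b + 2) := by rw [Nat.choose_succ_succ]; omega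

lemma sum_choose_binom (x j : ℕ) (q : ℝ) :
    ∑ a ∈ Finset.range (x + 1), (a.choose j : ℝ) * (x.choose a : ℝ) * q ^ a * (1 - q) ^ (x - a)
      = (x.choose j : ℝ) * q ^ j := by
  by_cases hjx : j ≤ x
  · have h1 : ∑ a ∈ Finset.range (x + 1),
        (a.choose j : ℝ) * (x.choose a : ℝ) * q ^ a * (1 - q) ^ (x - a)
        = ∑ a ∈ Finset.Ico j (x + 1),
        (a.choose j : ℝ) * (x.choose a : ℝ) * q ^ a * (1 - q) ^ (x - a) := by
      rw [Finset.range_eq_Ico]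
      refine (Finset.sum_subset (Finset.Ico_subset_Ico (Nat.zero_le _) le_rfl) ?_).symm
      intro a ha hna
      have : a < j := by
        simp only [Finset.mem_Ico] at ha hna; omega
      rw [Nat.choose_eq_zero_of_lt this]
      simp
    rw [h1, Finset.sum_Ico_eq_sum_range]
    have h2 : x + 1 - j = x - j + 1 := by omega
    rw [h2]
    have h3 : ∀ i ∈ Finset.range (x - j + 1),
        ((j + i).choose j : ℝ) * (x.choose (j + i) : ℝ) * q ^ (j + i) * (1 - q) ^ (x - (j + i))
        = (x.choose j : ℝ) * q ^ j * ((x - j).choose i * q ^ i * (1 - q) ^ (x - j - i)) := by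
      intro i hi
      have hix : j + i ≤ x := by simp only [Finset.mem_range] at hi; omega
      have key : x.choose (j + i) * (j + i).choose j = x.choose j * (x - j).choose i := by
        have := Nat.choose_mul (n := x) (k := j + i) (s := j) (Nat.le_add_right _ _)
        simpa using this
      have keyR : ((j+i).choose j : ℝ) * (x.choose (j+i) : ℝ)
          = (x.choose j : ℝ) * ((x - j).choose i : ℝ) := by
        exact_mod_cast by rw [mul_comm]; exact_mod_cast congrArg (Nat.cast (R := ℝ)) key
      have hexp : x - (j + i) = x - j - i := by omega
      rw [hexp, keyR, pow_add]
      ring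
    rw [Finset.sum_congr rfl h3, ← Finset.mul_sum]
    have hb : ∑ i ∈ Finset.range (x - j + 1),
        ((x - j).choose i : ℝ) * q ^ i * (1 - q) ^ (x - j - i) = 1 := by
      have := add_pow q (1 - q) (x - j)
      simp only [add_sub_cancel, one_pow] at this
      calc ∑ i ∈ Finset.range (x - j + 1),
            ((x - j).choose i : ℝ) * q ^ i * (1 - q) ^ (x - j - i)
          = ∑ i ∈ Finset.range (x - j + 1),
            q ^ i * (1 - q) ^ (x - j - i) * ((x - j).choose i : ℝ) :=
          Finset.sum_congr rfl fun i _ => by ring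
        _ = 1 := this.symm
    rw [hb, mul_one]
  · have hx : ∀ a ∈ Finset.range (x + 1),
        (a.choose j : ℝ) * (x.choose a : ℝ) * q ^ a * (1 - q) ^ (x - a) = 0 := by
      intro a ha
      simp only [Finset.mem_range] at ha
      rw [Nat.choose_eq_zero_of_lt (by omega)]
      simp
    rw [Finset.sum_congr rfl hx, Finset.sum_const, Nat.choose_eq_zero_of_lt (by omega)]
    simp

/-- Drift bounds for the (1+1) EA on OneMax: if the current search point has
`x` zeros, `1 ≤ x ≤ n`, then
`(1 − 1/n)^{n−x} · x/n ≤ E[X t − X (t+1) | X t = x]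
  ≤ ((1 − 1/n)(1 + x/(n−1)²))^{n−x} · x/n`. -/
theorem oneMax_drift_bounds (n : ℕ) (x : ℕ) (hx1 : 1 ≤ x) (hxn : x ≤ n)
    (p : Fin n → Bool) (hp : zeros p = x) :
    (1 - 1 / (n : ℝ)) ^ (n - x) * (x / n) ≤ oneMaxDrift p ∧
    oneMaxDrift p ≤
      ((1 - 1 / (n : ℝ)) * (1 + (x : ℝ) / ((n : ℝ) - 1) ^ 2)) ^ (n - x) *
        (x / n) := by
  classical
  have hn1 : 1 ≤ n := le_trans hx1 hxn
  have hnR : (1 : ℝ) ≤ n := by exact_mod_cast hn1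
  set m := n - x with hm
  set q : ℝ := 1 / n with hq
  have hq0 : 0 ≤ q := by positivity
  have hq1 : q ≤ 1 := by
    rw [hq, div_le_one (by linarith)]; linarith
  have h1q : 0 ≤ 1 - q := by linarith
  set Z : Finset (Fin n) := Finset.univ.filter fun i => p i = false with hZ
  set O : Finset (Fin n) := Finset.univ.filter fun i => p i = true with hO
  have hZcard : Z.card = x := hp
  have hOcard : O.card = m := by
    have h1 : O = Finset.univ.filter fun i => ¬ (p i = false) := by
      ext i; cases hpi : p i <;> simp [hO, hpi]
    have h2 := Finset.card_filter_add_card_filter_not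
      (s := (Finset.univ : Finset (Fin n))) (p := fun i => p i = false)
    rw [← hZ] at h2
    rw [h1]
    have h3 : (Finset.univ : Finset (Fin n)).card = n := by simp
    rw [h3, hZcard] at h2
    omega
  have hD0 : ∀ s t : ℕ, 0 ≤ (if t ≤ s then (s : ℝ) - t else 0) := by
    intro s t
    split
    · rename_i h
      have : (t : ℝ) ≤ s := by exact_mod_cast h
      linarith
    · exact le_rfl
  -- key double-sum formula
  have key := drift_eq n x hxn p hp
  rw [← hZ, ← hO, ← hq] at key
  rw [sum_powerset_card_real Z (fun s => ∑ T ∈ O.powerset,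
      q ^ (s + T.card) * (1 - q) ^ (n - (s + T.card)) *
        (if T.card ≤ s then (s : ℝ) - T.card else 0))] at key
  rw [hZcard] at key
  have key2 : oneMaxDrift p = ∑ s ∈ Finset.range (x + 1), ∑ t ∈ Finset.range (m + 1),
      (x.choose s : ℝ) * ((m.choose t : ℝ) *
        (q ^ (s + t) * (1 - q) ^ (n - (s + t)) * (if t ≤ s then (s : ℝ) - t else 0))) := by
    rw [key]
    refine Finset.sum_congr rfl fun s hs => ?_
    rw [sum_powerset_card_real O (fun t =>
      q ^ (s + t) * (1 - q) ^ (n - (s + t)) * (if t ≤ s then (s : ℝ) - t else 0))]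
    rw [hOcard, Finset.mul_sum]
  have key3 : oneMaxDrift p = ∑ t ∈ Finset.range (m + 1),
      ((m.choose t : ℝ) * q ^ t * (1 - q) ^ (m - t)) *
        (∑ s ∈ Finset.range (x + 1),
          (x.choose s : ℝ) * q ^ s * (1 - q) ^ (x - s) * (if t ≤ s then (s : ℝ) - t else 0)) := by
    rw [key2, Finset.sum_comm]
    refine Finset.sum_congr rfl fun t ht => ?_
    rw [Finset.mul_sum]
    refine Finset.sum_congr rfl fun s hs => ?_
    simp only [Finset.mem_range] at ht hs
    have hexp : n - (s + t) = (x - s) + (m - t) := by omega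
    rw [hexp, pow_add, pow_add]
    ring
  -- nonnegativity of the inner sums and coefficients
  have hc0 : ∀ t : ℕ, 0 ≤ ((m.choose t : ℝ) * q ^ t * (1 - q) ^ (m - t)) := by
    intro t; positivity
  have hinner0 : ∀ t : ℕ, 0 ≤ ∑ s ∈ Finset.range (x + 1),
      (x.choose s : ℝ) * q ^ s * (1 - q) ^ (x - s) * (if t ≤ s then (s : ℝ) - t else 0) := by
    intro t
    refine Finset.sum_nonneg fun s _ => ?_
    have := hD0 s t
    positivity
  constructor
  · -- lower bound
    have h0 : ∑ s ∈ Finset.range (x + 1),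
        (x.choose s : ℝ) * q ^ s * (1 - q) ^ (x - s) * (if 0 ≤ s then (s : ℝ) - ((0:ℕ):ℝ) else 0)
        = (x : ℝ) * q := by
      have := sum_choose_binom x 1 q
      rw [Nat.choose_one_right, pow_one] at this
      rw [← this]
      refine Finset.sum_congr rfl fun s _ => ?_
      rw [if_pos (Nat.zero_le s), Nat.choose_one_right]
      push_cast
      ring
    have hsingle : ((m.choose 0 : ℝ) * q ^ 0 * (1 - q) ^ (m - 0)) *
        (∑ s ∈ Finset.range (x + 1),
          (x.choose s : ℝ) * q ^ s * (1 - q) ^ (x - s) * (if 0 ≤ s then (s : ℝ) - ((0:ℕ):ℝ) else 0))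
        ≤ oneMaxDrift p := by
      rw [key3]
      refine Finset.single_le_sum (f := fun t => ((m.choose t : ℝ) * q ^ t * (1 - q) ^ (m - t)) *
        (∑ s ∈ Finset.range (x + 1),
          (x.choose s : ℝ) * q ^ s * (1 - q) ^ (x - s) * (if t ≤ s then (s : ℝ) - t else 0)))
        (a := 0) (fun t _ => mul_nonneg (hc0 t) (hinner0 t))
        (Finset.mem_range.mpr (Nat.succ_pos m))
    rw [h0] at hsingle
    simp only [Nat.choose_zero_right, Nat.cast_one, pow_zero, Nat.sub_zero, one_mul, mul_one]
      at hsingle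
    calc (1 - q) ^ m * ((x : ℝ) / n) = (1 - q) ^ m * ((x : ℝ) * q) := by
          rw [hq]; ring
      _ ≤ oneMaxDrift p := hsingle
  · -- upper bound
    have hub : ∀ t ∈ Finset.range (m + 1),
        ((m.choose t : ℝ) * q ^ t * (1 - q) ^ (m - t)) *
          (∑ s ∈ Finset.range (x + 1),
            (x.choose s : ℝ) * q ^ s * (1 - q) ^ (x - s) * (if t ≤ s then (s : ℝ) - t else 0))
        ≤ ((m.choose t : ℝ) * q ^ t * (1 - q) ^ (m - t)) *
            (((x : ℝ) * q) * ((x : ℝ) / ((n : ℝ) - 1)) ^ t) := by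
      intro t ht
      refine mul_le_mul_of_nonneg_left ?_ (hc0 t)
      have step1 : ∑ s ∈ Finset.range (x + 1),
          (x.choose s : ℝ) * q ^ s * (1 - q) ^ (x - s) * (if t ≤ s then (s : ℝ) - t else 0)
          ≤ (x.choose (t + 1) : ℝ) * q ^ (t + 1) := by
        rw [← sum_choose_binom x (t + 1) q]
        refine Finset.sum_le_sum fun s _ => ?_
        have hDle : (if t ≤ s then (s : ℝ) - t else 0) ≤ (s.choose (t + 1) : ℝ) := by
          split
          · rename_i h
            have h1 : ((s - t : ℕ) : ℝ) = (s : ℝ) - t := by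
              push_cast [h]; ring
            rw [← h1]
            exact_mod_cast sub_le_choose s t
          · positivity
        calc (x.choose s : ℝ) * q ^ s * (1 - q) ^ (x - s) * (if t ≤ s then (s : ℝ) - t else 0)
            ≤ (x.choose s : ℝ) * q ^ s * (1 - q) ^ (x - s) * (s.choose (t + 1) : ℝ) := by
              refine mul_le_mul_of_nonneg_left hDle (by positivity)
          _ = (s.choose (t + 1) : ℝ) * (x.choose s : ℝ) * q ^ s * (1 - q) ^ (x - s) := by ring
      have step2 : (x.choose (t + 1) : ℝ) * q ^ (t + 1) ≤ ((x : ℝ) * q) * ((x : ℝ) * q) ^ t := by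
        have h1 : (x.choose (t + 1) : ℝ) ≤ (x : ℝ) ^ (t + 1) := by
          exact_mod_cast Nat.choose_le_pow x (t + 1)
        calc (x.choose (t + 1) : ℝ) * q ^ (t + 1) ≤ (x : ℝ) ^ (t + 1) * q ^ (t + 1) := by
              refine mul_le_mul_of_nonneg_right h1 (by positivity)
          _ = ((x : ℝ) * q) * ((x : ℝ) * q) ^ t := by
              rw [← mul_pow, pow_succ]; ring
      have step3 : ((x : ℝ) * q) * ((x : ℝ) * q) ^ t
          ≤ ((x : ℝ) * q) * ((x : ℝ) / ((n : ℝ) - 1)) ^ t := by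
        rcases Nat.eq_zero_or_pos t with rfl | htpos
        · simp
        · have hm1 : 1 ≤ m := by
            simp only [Finset.mem_range] at ht; omega
          have hn2 : 2 ≤ n := by omega
          have hn2R : (2 : ℝ) ≤ n := by exact_mod_cast hn2
          have hle : (x : ℝ) * q ≤ (x : ℝ) / ((n : ℝ) - 1) := by
            rw [hq, mul_one_div]
            exact div_le_div_of_nonneg_left (by positivity) (by linarith) (by linarith)
          refine mul_le_mul_of_nonneg_left (pow_le_pow_left₀ (by positivity) hle t)
            (by positivity)
      exact le_trans step1 (le_trans step2 step3)
    have hsum : ∑ t ∈ Finset.range (m + 1),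
        ((m.choose t : ℝ) * q ^ t * (1 - q) ^ (m - t)) *
          (((x : ℝ) * q) * ((x : ℝ) / ((n : ℝ) - 1)) ^ t)
        = ((x : ℝ) * q) * (q * ((x : ℝ) / ((n : ℝ) - 1)) + (1 - q)) ^ m := by
      rw [add_pow, Finset.mul_sum]
      refine Finset.sum_congr rfl fun t _ => ?_
      rw [mul_pow]
      ring
    have hmain : oneMaxDrift p ≤ ((x : ℝ) * q) * (q * ((x : ℝ) / ((n : ℝ) - 1)) + (1 - q)) ^ m := by
      rw [key3, ← hsum]
      exact Finset.sum_le_sum hub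
    refine le_trans hmain ?_
    rcases Nat.eq_zero_or_pos m with hm0 | hmpos
    · rw [hm0]
      simp only [pow_zero, mul_one, one_mul]
      rw [hq, mul_one_div]
    · have hn2 : 2 ≤ n := by omega
      have hn2R : (2 : ℝ) ≤ n := by exact_mod_cast hn2
      have hbase : q * ((x : ℝ) / ((n : ℝ) - 1)) + (1 - q)
          = (1 - q) * (1 + (x : ℝ) / ((n : ℝ) - 1) ^ 2) := by
        rw [hq]
        have h1 : (n : ℝ) ≠ 0 := by linarith
        have h2 : (n : ℝ) - 1 ≠ 0 := by linarith
        field_simp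
        ring
      rw [hbase, hq, mul_one_div, mul_comm]
end
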